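/- arXiv:2510.12456 — 5 statements merged into one kernel-verified Lean document; each statement's English description precedes it below -/
import Mathlib

section
/- Let g : ℝ → ℝ be Lipschitz continuous with g(r) ≥ m for all r ∈ [0,1], where m > 0, let x₀ ∈ [0,1], and set s_f = ∫₀^{x₀} dr/g(r). Then there exists a unique differentiable function x̂ : [0, s_f] → [0,1] with x̂(0) = x₀ and x̂'(s) = −g(x̂(s)) for all s ∈ [0, s_f]; moreover x̂ is strictly decreasing, x̂(s_f) = 0, and ∫_{x̂(s)}^{x₀} dr/g(r) = s for every s ∈ [0, s_f]. -/
open MeasureTheory Set Filter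

/-- for a Lipschitz velocity `g` with `g ≥ m > 0` on `[0,1]`,
`x₀ ∈ [0,1]`, and `s_f = ∫₀^{x₀} dr/g(r)`, there is a unique differentiable
function `x̂ : [0,s_f] → [0,1]` with `x̂(0) = x₀` and `x̂'(s) = −g(x̂(s))`;
moreover `x̂` is strictly decreasing, `x̂(s_f) = 0`, and
`∫_{x̂(s)}^{x₀} dr/g(r) = s` for every `s ∈ [0,s_f]`. -/
theorem stmt_12 (g : ℝ → ℝ) (K : NNReal) (hg : LipschitzWith K g)
    (m : ℝ) (hm : 0 < m) (hgm : ∀ r ∈ Set.Icc (0:ℝ) 1, m ≤ g r)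
    (x₀ : ℝ) (hx₀ : x₀ ∈ Set.Icc (0:ℝ) 1)
    (sf : ℝ) (hsf : sf = ∫ r in (0:ℝ)..x₀, 1 / g r) :
    ∃ xhat : ℝ → ℝ,
      xhat 0 = x₀ ∧
      (∀ s ∈ Set.Icc 0 sf, xhat s ∈ Set.Icc (0:ℝ) 1) ∧
      (∀ s ∈ Set.Icc 0 sf,
        HasDerivWithinAt xhat (-(g (xhat s))) (Set.Icc 0 sf) s) ∧
      StrictAntiOn xhat (Set.Icc 0 sf) ∧
      xhat sf = 0 ∧
      (∀ s ∈ Set.Icc 0 sf, ∫ r in (xhat s)..x₀, 1 / g r = s) ∧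
      (∀ y : ℝ → ℝ, y 0 = x₀ →
        (∀ s ∈ Set.Icc 0 sf, y s ∈ Set.Icc (0:ℝ) 1) →
        (∀ s ∈ Set.Icc 0 sf,
          HasDerivWithinAt y (-(g (y s))) (Set.Icc 0 sf) s) →
        ∀ s ∈ Set.Icc 0 sf, y s = xhat s) := by
  classical
  -- projection onto [0,1] and modified velocity h
  set π : ℝ → ℝ := fun r => max 0 (min r 1) with hπdef
  have hπmem : ∀ r, π r ∈ Icc (0:ℝ) 1 :=
    fun r => ⟨le_max_left _ _, max_le zero_le_one (min_le_right _ _)⟩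
  have hπid : ∀ r ∈ Icc (0:ℝ) 1, π r = r := by
    intro r hr
    simp [hπdef, min_eq_left hr.2, max_eq_right hr.1]
  set h : ℝ → ℝ := fun r => g (π r) with hhdef
  have hhg : ∀ r ∈ Icc (0:ℝ) 1, h r = g r := by
    intro r hr; simp [hhdef, hπid r hr]
  have hcont : Continuous h :=
    hg.continuous.comp (continuous_const.max (continuous_id.min continuous_const))
  have hhm : ∀ r, m ≤ h r := fun r => hgm _ (hπmem r)
  have hhpos : ∀ r, 0 < h r := fun r => hm.trans_le (hhm r)
  -- upper bound M
  obtain ⟨z, hz, hMz'⟩ := (isCompact_Icc (a := (0:ℝ)) (b := 1)).exists_isMaxOn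
    ⟨0, by norm_num⟩ hg.continuous.continuousOn
  have hMz : ∀ w ∈ Icc (0:ℝ) 1, g w ≤ g z := fun w hw => hMz' hw
  set M := g z with hMdef
  have hMpos : 0 < M := hm.trans_le (hgm z hz)
  have hhM : ∀ r, h r ≤ M := fun r => hMz _ (hπmem r)
  -- integrand f = 1/h
  set f : ℝ → ℝ := fun r => (h r)⁻¹ with hfdef
  have hfcont : Continuous f := hcont.inv₀ fun r => (hhpos r).ne'
  have hfpos : ∀ r, 0 < f r := fun r => inv_pos.2 (hhpos r)
  have hfint : ∀ a b : ℝ, IntervalIntegrable f volume a b :=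
    fun a b => hfcont.intervalIntegrable a b
  have hflb : ∀ r, M⁻¹ ≤ f r := fun r => inv_anti₀ (hhpos r) (hhM r)
  set u : ℝ → ℝ := fun x => ∫ t in x₀..x, f t with hudef
  have hu_deriv : ∀ x, HasDerivAt u (f x) x := fun x =>
    intervalIntegral.integral_hasDerivAt_right (hfint _ _)
      (hfcont.stronglyMeasurableAtFilter _ _) hfcont.continuousAt
  have hu_cont : Continuous u :=
    continuous_iff_continuousAt.2 fun x => (hu_deriv x).continuousAt
  have hu_mono : StrictMono u := strictMono_of_deriv_pos fun x => by
    rw [(hu_deriv x).deriv]; exact hfpos x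
  -- growth bounds
  have hub : ∀ x, x₀ ≤ x → (x - x₀) * M⁻¹ ≤ u x := by
    intro x hx
    have : ∫ t in x₀..x, M⁻¹ ≤ ∫ t in x₀..x, f t :=
      intervalIntegral.integral_mono_on hx (intervalIntegrable_const) (hfint _ _)
        fun t _ => hflb t
    simpa [intervalIntegral.integral_const, smul_eq_mul] using this
  have hlb : ∀ x, x ≤ x₀ → u x ≤ (x - x₀) * M⁻¹ := by
    intro x hx
    have h1 : ∫ t in x..x₀, M⁻¹ ≤ ∫ t in x..x₀, f t :=
      intervalIntegral.integral_mono_on hx (intervalIntegrable_const) (hfint _ _)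
        fun t _ => hflb t
    have h2 : u x = -∫ t in x..x₀, f t := by
      rw [hudef]; exact intervalIntegral.integral_symm _ _
    rw [h2]
    have : (x₀ - x) * M⁻¹ ≤ ∫ t in x..x₀, f t := by
      simpa [intervalIntegral.integral_const, smul_eq_mul] using h1
    linarith
  have htop : Tendsto u atTop atTop := by
    have h1 : Tendsto (fun x : ℝ => (x - x₀) * M⁻¹) atTop atTop := by
      apply Tendsto.atTop_mul_const (inv_pos.2 hMpos)
      simpa [sub_eq_add_neg] using tendsto_atTop_add_const_right atTop (-x₀) tendsto_id
    refine tendsto_atTop_mono' atTop ?_ h1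
    filter_upwards [eventually_ge_atTop x₀] with x hx using hub x hx
  have hbot : Tendsto u atBot atBot := by
    have h1 : Tendsto (fun x : ℝ => (x - x₀) * M⁻¹) atBot atBot := by
      apply Tendsto.atBot_mul_const (inv_pos.2 hMpos)
      simpa [sub_eq_add_neg] using tendsto_atBot_add_const_right atBot (-x₀) tendsto_id
    refine tendsto_atBot_mono' atBot ?_ h1
    filter_upwards [eventually_le_atBot x₀] with x hx using hlb x hx
  have hu_surj : Function.Surjective u := hu_cont.surjective htop hbot
  set e : ℝ ≃o ℝ := StrictMono.orderIsoOfSurjective u hu_mono hu_surj with hedef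
  have he : ∀ x, e x = u x := fun x => rfl
  have hue : ∀ s, u (e.symm s) = s := fun s => by
    have := e.apply_symm_apply s; rwa [he] at this
  have hinj : Function.Injective u := hu_mono.injective
  set xhat : ℝ → ℝ := fun s => e.symm (-s) with hxhatdef
  have hxu : ∀ s, u (xhat s) = -s := fun s => hue (-s)
  have hux₀ : u x₀ = 0 := by simp [hudef]
  have hxhat0 : xhat 0 = x₀ := by
    apply hinj; rw [hxu, hux₀, neg_zero]
  -- sf = -(u 0)
  have hsfu : u 0 = -sf := by
    have hcongr : EqOn (fun r => 1 / g r) f (uIcc (0:ℝ) x₀) := by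
      intro r hr
      rw [uIcc_of_le hx₀.1] at hr
      have : r ∈ Icc (0:ℝ) 1 := ⟨hr.1, hr.2.trans hx₀.2⟩
      simp [hfdef, hhg r this, one_div]
    have h4 : sf = ∫ t in (0:ℝ)..x₀, f t := by
      rw [hsf]; exact intervalIntegral.integral_congr hcongr
    have h5 : u 0 = -∫ t in (0:ℝ)..x₀, f t := intervalIntegral.integral_symm 0 x₀
    rw [h5, ← h4]
  have hxhatsf : xhat sf = 0 := by
    apply hinj; rw [hxu, hsfu]
  have hsymm_mono : StrictMono (⇑e.symm) := e.symm.strictMono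
  have hmem : ∀ s ∈ Icc 0 sf, xhat s ∈ Icc (0:ℝ) 1 := by
    intro s hs
    constructor
    · rw [← hxhatsf]; exact hsymm_mono.monotone (neg_le_neg hs.2)
    · calc xhat s ≤ xhat 0 := hsymm_mono.monotone (neg_le_neg hs.1)
        _ = x₀ := hxhat0
        _ ≤ 1 := hx₀.2
  -- derivative of xhat (everywhere)
  have hxd : ∀ s, HasDerivAt xhat (-(h (xhat s))) s := by
    intro s
    have h1 : HasDerivAt (⇑e.symm) (f (e.symm (-s)))⁻¹ (-s) :=
      HasDerivAt.of_local_left_inverse e.symm.continuous.continuousAt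
        (hu_deriv _) (hfpos _).ne' (Eventually.of_forall hue)
    have h2 : HasDerivAt (fun t : ℝ => -t) (-1 : ℝ) s := (hasDerivAt_id s).neg
    have h3 := h1.comp s h2
    have : (f (e.symm (-s)))⁻¹ * (-1) = -(h (xhat s)) := by
      simp [hfdef, hxhatdef]
    rwa [this] at h3
  have hderiv : ∀ s ∈ Icc 0 sf, HasDerivWithinAt xhat (-(g (xhat s))) (Icc 0 sf) s := by
    intro s hs
    have := (hxd s).hasDerivWithinAt (s := Icc 0 sf)
    rwa [hhg _ (hmem s hs)] at this
  have hanti : StrictAntiOn xhat (Icc 0 sf) := by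
    intro a _ b _ hab
    exact hsymm_mono (neg_lt_neg hab)
  have hint : ∀ s ∈ Icc 0 sf, ∫ r in (xhat s)..x₀, 1 / g r = s := by
    intro s hs
    have hcongr : EqOn (fun r => 1 / g r) f (uIcc (xhat s) x₀) := by
      intro r hr
      have hsub : uIcc (xhat s) x₀ ⊆ Icc (0:ℝ) 1 :=
        uIcc_subset_Icc (hmem s hs) hx₀
      have := hsub hr
      simp [hfdef, hhg r this, one_div]
    rw [intervalIntegral.integral_congr hcongr, intervalIntegral.integral_symm]
    have : ∫ t in x₀..(xhat s), f t = u (xhat s) := rfl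
    rw [this, hxu, neg_neg]
  refine ⟨xhat, hxhat0, hmem, hderiv, hanti, hxhatsf, hint, ?_⟩
  -- uniqueness
  intro y hy0 hymem hyd s hs
  have hycont : ContinuousOn y (Icc 0 sf) := fun t ht => (hyd t ht).continuousWithinAt
  set ψ : ℝ → ℝ := fun t => u (y t) + t with hψdef
  have hψcont : ContinuousOn ψ (Icc 0 sf) :=
    (hu_cont.comp_continuousOn hycont).add continuousOn_id
  have hψd : ∀ t ∈ Ico 0 sf, HasDerivWithinAt ψ 0 (Ici t) t := by
    intro t ht
    have ht' : t ∈ Icc 0 sf := ⟨ht.1, ht.2.le⟩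
    have h1 : HasDerivWithinAt (fun t => u (y t)) (f (y t) * (-(g (y t)))) (Icc 0 sf) t :=
      (hu_deriv (y t)).comp_hasDerivWithinAt t (hyd t ht')
    have h2 : HasDerivWithinAt ψ (f (y t) * (-(g (y t))) + 1) (Icc 0 sf) t :=
      h1.add (hasDerivWithinAt_id t _)
    have h3 : f (y t) * (-(g (y t))) + 1 = 0 := by
      have hy1 := hymem t ht'
      have : g (y t) = h (y t) := (hhg _ hy1).symm
      rw [this]
      field_simp [hfdef, (hhpos (y t)).ne']
      simp only [hfdef, inv_mul_cancel₀ (hhpos (y t)).ne']; ring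
    rw [h3] at h2
    exact h2.mono_of_mem_nhdsWithin (Icc_mem_nhdsGE_of_mem ht)
  have hconst := constant_of_has_deriv_right_zero hψcont hψd s hs
  have hψ0 : ψ 0 = 0 := by simp [hψdef, hy0, hux₀]
  have : u (y s) = -s := by
    have : ψ s = 0 := hconst.trans hψ0
    simp only [hψdef] at this
    linarith
  apply hinj
  rw [this, hxu]
end

section
/- Let γ > 0, ε ∈ {−1, 1}, and m_μ, m_λ > 0, and let μ, λ : [0,1] → ℝ be continuous with μ(r) ≥ m_μ and λ(r) ≥ m_λ for all r ∈ [0,1]. Let s_f ≥ 0 and let x̂, ξ̂ : [0, s_f] → [0,1] be differentiable with x̂'(s) = −μ(x̂(s)) and ξ̂'(s) = λ(ξ̂(s)) for all s. Define Φ(a,b) = exp(a e^{−γε}) − exp(b e^{γε}) + exp(e^γ). Then Φ(x̂(s), ξ̂(s)) ≥ 0 for all s ∈ [0, s_f], and for every integer ℓ ≥ 0: ∫₀^{s_f} Φ(x̂(s), ξ̂(s))^ℓ ds ≤ (e^γ / (m_μ + m_λ)) · Φ(x̂(0), ξ̂(0))^{ℓ+1} / (ℓ+1). -/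
open MeasureTheory Set Filter

/-- along the characteristic projections `x̂' = −μ(x̂)`,
`ξ̂' = λ(ξ̂)` of the K-kernel equation, the weight
`Φ(a,b) = exp(a e^{−γε}) − exp(b e^{γε}) + exp(e^γ)` is nonnegative and
satisfies, for every integer `ℓ ≥ 0`,
`∫₀^{s_f} Φ(x̂(s),ξ̂(s))^ℓ ds ≤ (e^γ/(m_μ+m_λ)) Φ(x̂(0),ξ̂(0))^{ℓ+1}/(ℓ+1)`. -/
theorem stmt_14 (γ ε mmu mlam : ℝ) (hγ : 0 < γ) (hε : ε = -1 ∨ ε = 1)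
    (hmmu : 0 < mmu) (hmlam : 0 < mlam)
    (mu lam : ℝ → ℝ)
    (hmuc : ContinuousOn mu (Set.Icc (0:ℝ) 1))
    (hlamc : ContinuousOn lam (Set.Icc (0:ℝ) 1))
    (hmub : ∀ r ∈ Set.Icc (0:ℝ) 1, mmu ≤ mu r)
    (hlamb : ∀ r ∈ Set.Icc (0:ℝ) 1, mlam ≤ lam r)
    (sf : ℝ) (hsf : 0 ≤ sf)
    (xhat ξhat : ℝ → ℝ)
    (hxr : ∀ s ∈ Set.Icc 0 sf, xhat s ∈ Set.Icc (0:ℝ) 1)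
    (hξr : ∀ s ∈ Set.Icc 0 sf, ξhat s ∈ Set.Icc (0:ℝ) 1)
    (hxd : ∀ s ∈ Set.Icc 0 sf,
      HasDerivWithinAt xhat (-(mu (xhat s))) (Set.Icc 0 sf) s)
    (hξd : ∀ s ∈ Set.Icc 0 sf,
      HasDerivWithinAt ξhat (lam (ξhat s)) (Set.Icc 0 sf) s)
    (Φ : ℝ → ℝ → ℝ)
    (hΦ : ∀ a b : ℝ, Φ a b =
      Real.exp (a * Real.exp (-γ * ε)) - Real.exp (b * Real.exp (γ * ε)) +
        Real.exp (Real.exp γ)) :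
    (∀ s ∈ Set.Icc 0 sf, 0 ≤ Φ (xhat s) (ξhat s)) ∧
    ∀ ℓ : ℕ, ∫ s in (0:ℝ)..sf, (Φ (xhat s) (ξhat s)) ^ ℓ
      ≤ (Real.exp γ / (mmu + mlam)) * (Φ (xhat 0) (ξhat 0)) ^ (ℓ + 1) / (ℓ + 1) := by
  set E1 : ℝ := Real.exp (-γ * ε) with hE1def
  set E2 : ℝ := Real.exp (γ * ε) with hE2def
  have hE1 : E1 = Real.exp (-γ) ∨ E1 = Real.exp γ := by
    rcases hε with h | h
    · right; rw [hE1def, h]; ring_nf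
    · left; rw [hE1def, h]; ring_nf
  have hE2 : E2 = Real.exp (-γ) ∨ E2 = Real.exp γ := by
    rcases hε with h | h
    · left; rw [hE2def, h]; ring_nf
    · right; rw [hE2def, h]; ring_nf
  -- a key pointwise lower bound
  have key : ∀ d : ℝ, (d = Real.exp (-γ) ∨ d = Real.exp γ) → ∀ a : ℝ, 0 ≤ a →
      Real.exp (-γ) ≤ d * Real.exp (a * d) := by
    intro d hd a ha
    have hd0 : Real.exp (-γ) ≤ d := by
      rcases hd with h | h
      · rw [h]
      · rw [h]; exact Real.exp_le_exp.2 (by linarith)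
    have hdp : 0 < d := lt_of_lt_of_le (Real.exp_pos _) hd0
    have h1 : (1:ℝ) ≤ Real.exp (a * d) := Real.one_le_exp (by positivity)
    nlinarith [Real.exp_pos (-γ)]
  have hdub : ∀ d : ℝ, (d = Real.exp (-γ) ∨ d = Real.exp γ) → d ≤ Real.exp γ := by
    intro d hd
    rcases hd with h | h
    · rw [h]; exact Real.exp_le_exp.2 (by linarith)
    · rw [h]
  -- Φ ≥ 1 on the relevant range
  have hΦ1 : ∀ s ∈ Set.Icc 0 sf, 1 ≤ Φ (xhat s) (ξhat s) := by
    intro s hs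
    obtain ⟨ha0, ha1⟩ := hxr s hs
    obtain ⟨hb0, hb1⟩ := hξr s hs
    rw [hΦ]
    have hE1p : 0 < E1 := Real.exp_pos _
    have hE2p : 0 < E2 := Real.exp_pos _
    have h1 : (1:ℝ) ≤ Real.exp (xhat s * E1) := Real.one_le_exp (by positivity)
    have h2 : Real.exp (ξhat s * E2) ≤ Real.exp (Real.exp γ) := by
      apply Real.exp_le_exp.2
      calc ξhat s * E2 ≤ 1 * E2 := mul_le_mul_of_nonneg_right hb1 hE2p.le
        _ = E2 := one_mul _
        _ ≤ Real.exp γ := hdub E2 hE2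
    linarith
  constructor
  · intro s hs; linarith [hΦ1 s hs]
  intro ℓ
  -- set up g and its derivative
  set g : ℝ → ℝ := fun s => Φ (xhat s) (ξhat s) with hgdef
  set g' : ℝ → ℝ := fun s =>
    -(mu (xhat s)) * (E1 * Real.exp (xhat s * E1)) -
      lam (ξhat s) * (E2 * Real.exp (ξhat s * E2)) with hg'def
  set c : ℝ := (mmu + mlam) * Real.exp (-γ) with hc
  have hcpos : 0 < c := by positivity
  have hgeq : g = fun t => Real.exp (xhat t * E1) - Real.exp (ξhat t * E2) +
      Real.exp (Real.exp γ) := by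
    funext t; simp only [hgdef, hΦ]
  have hgd : ∀ s ∈ Set.Icc 0 sf, HasDerivWithinAt g (g' s) (Set.Icc 0 sf) s := by
    intro s hs
    rw [hgeq]
    have h1 : HasDerivWithinAt (fun t => Real.exp (xhat t * E1))
        (Real.exp (xhat s * E1) * (-(mu (xhat s)) * E1)) (Set.Icc 0 sf) s :=
      ((hxd s hs).mul_const E1).exp
    have h2 : HasDerivWithinAt (fun t => Real.exp (ξhat t * E2))
        (Real.exp (ξhat s * E2) * (lam (ξhat s) * E2)) (Set.Icc 0 sf) s :=
      ((hξd s hs).mul_const E2).exp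
    have h3 := (h1.sub h2).add_const (Real.exp (Real.exp γ))
    refine h3.congr_deriv ?_
    simp only [hg'def]; ring
  -- derivative bound
  have hgb : ∀ s ∈ Set.Icc 0 sf, g' s ≤ -c := by
    intro s hs
    have hmu' := hmub _ (hxr s hs)
    have hlam' := hlamb _ (hξr s hs)
    have h1 : Real.exp (-γ) ≤ E1 * Real.exp (xhat s * E1) := key E1 hE1 _ (hxr s hs).1
    have h2 : Real.exp (-γ) ≤ E2 * Real.exp (ξhat s * E2) := key E2 hE2 _ (hξr s hs).1
    have A : mmu * Real.exp (-γ) ≤ mu (xhat s) * (E1 * Real.exp (xhat s * E1)) :=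
      mul_le_mul hmu' h1 (Real.exp_pos _).le (le_trans hmmu.le hmu')
    have B : mlam * Real.exp (-γ) ≤ lam (ξhat s) * (E2 * Real.exp (ξhat s * E2)) :=
      mul_le_mul hlam' h2 (Real.exp_pos _).le (le_trans hmlam.le hlam')
    simp only [hg'def, hc]
    nlinarith
  -- continuity
  have hxc : ContinuousOn xhat (Set.Icc 0 sf) := fun s hs => (hxd s hs).continuousWithinAt
  have hξc : ContinuousOn ξhat (Set.Icc 0 sf) := fun s hs => (hξd s hs).continuousWithinAt
  have hgc : ContinuousOn g (Set.Icc 0 sf) := fun s hs => (hgd s hs).continuousWithinAt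
  have hmux : ContinuousOn (fun s => mu (xhat s)) (Set.Icc 0 sf) := hmuc.comp hxc hxr
  have hlamξ : ContinuousOn (fun s => lam (ξhat s)) (Set.Icc 0 sf) := hlamc.comp hξc hξr
  have hexp1 : ContinuousOn (fun s => Real.exp (xhat s * E1)) (Set.Icc 0 sf) :=
    Real.continuous_exp.comp_continuousOn (hxc.mul continuousOn_const)
  have hexp2 : ContinuousOn (fun s => Real.exp (ξhat s * E2)) (Set.Icc 0 sf) :=
    Real.continuous_exp.comp_continuousOn (hξc.mul continuousOn_const)
  have hg'c : ContinuousOn g' (Set.Icc 0 sf) := by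
    rw [hg'def]
    exact (hmux.neg.mul (continuousOn_const.mul hexp1)).sub
      (hlamξ.mul (continuousOn_const.mul hexp2))
  have huIcc : Set.uIcc (0:ℝ) sf = Set.Icc 0 sf := Set.uIcc_of_le hsf
  have hint1 : IntervalIntegrable (fun s => g s ^ ℓ) volume 0 sf :=
    ContinuousOn.intervalIntegrable (by rw [huIcc]; exact hgc.pow ℓ)
  have hint2 : IntervalIntegrable (fun s => -(g' s) * g s ^ ℓ / c) volume 0 sf :=
    ContinuousOn.intervalIntegrable (by
      rw [huIcc]; exact (hg'c.neg.mul (hgc.pow ℓ)).div_const c)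
  -- FTC
  have hftc : ∫ s in (0:ℝ)..sf, (((ℓ:ℝ)+1) * g s ^ ℓ * g' s)
      = g sf ^ (ℓ+1) - g 0 ^ (ℓ+1) := by
    apply intervalIntegral.integral_eq_sub_of_hasDeriv_right_of_le hsf
    · exact hgc.pow (ℓ+1)
    · intro x hx
      have hmem : x ∈ Set.Icc 0 sf := Set.Ioo_subset_Icc_self hx
      have hd : HasDerivAt g (g' x) x :=
        (hgd x hmem).hasDerivAt (Icc_mem_nhds hx.1 hx.2)
      have := (hd.pow (ℓ+1)).hasDerivWithinAt (s := Set.Ioi x)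
      exact this.congr_deriv (by simp)
    · exact ContinuousOn.intervalIntegrable (by
        rw [huIcc]
        exact (continuousOn_const.mul (hgc.pow ℓ)).mul hg'c)
  -- pointwise monotone comparison
  have hmono : ∫ s in (0:ℝ)..sf, g s ^ ℓ ≤ ∫ s in (0:ℝ)..sf, -(g' s) * g s ^ ℓ / c := by
    apply intervalIntegral.integral_mono_on hsf hint1 hint2
    intro s hs
    have hg0 : 0 ≤ g s ^ ℓ := pow_nonneg (by linarith [hΦ1 s hs]) _
    have hb := hgb s hs
    rw [le_div_iff₀ hcpos]
    calc g s ^ ℓ * c = c * g s ^ ℓ := by ring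
      _ ≤ -(g' s) * g s ^ ℓ := mul_le_mul_of_nonneg_right (by linarith) hg0
  -- rewrite the comparison integral via FTC
  have hrw : (fun s => -(g' s) * g s ^ ℓ / c)
      = fun s => (-(1/(c*((ℓ:ℝ)+1)))) * (((ℓ:ℝ)+1) * g s ^ ℓ * g' s) := by
    funext s
    have hl1 : ((ℓ:ℝ)+1) ≠ 0 := by positivity
    field_simp
  have hval : ∫ s in (0:ℝ)..sf, -(g' s) * g s ^ ℓ / c
      = (-(1/(c*((ℓ:ℝ)+1)))) * (g sf ^ (ℓ+1) - g 0 ^ (ℓ+1)) := by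
    rw [hrw, intervalIntegral.integral_const_mul, hftc]
  -- final arithmetic
  have hg00 : (0:ℝ) ∈ Set.Icc 0 sf := ⟨le_refl _, hsf⟩
  have hgsf : (0:ℝ) ≤ g sf ^ (ℓ+1) :=
    pow_nonneg (by linarith [hΦ1 sf ⟨hsf, le_refl _⟩]) _
  have hcoef : Real.exp γ / (mmu + mlam) = 1 / c := by
    rw [hc, Real.exp_neg]
    rw [div_eq_div_iff (by positivity) (by positivity)]
    field_simp
  have hL : (0:ℝ) < (ℓ:ℝ) + 1 := by positivity
  have hfinal : (-(1/(c*((ℓ:ℝ)+1)))) * (g sf ^ (ℓ+1) - g 0 ^ (ℓ+1))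
      ≤ Real.exp γ / (mmu + mlam) * g 0 ^ (ℓ+1) / ((ℓ:ℝ)+1) := by
    rw [hcoef]
    have h1 : (-(1/(c*((ℓ:ℝ)+1)))) * (g sf ^ (ℓ+1) - g 0 ^ (ℓ+1))
        = (g 0 ^ (ℓ+1) - g sf ^ (ℓ+1)) / (c*((ℓ:ℝ)+1)) := by
      field_simp
      ring
    have h2 : 1 / c * g 0 ^ (ℓ+1) / ((ℓ:ℝ)+1) = g 0 ^ (ℓ+1) / (c*((ℓ:ℝ)+1)) := by
      field_simp
    rw [h1, h2]
    gcongr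
    linarith
  calc ∫ s in (0:ℝ)..sf, g s ^ ℓ
      ≤ ∫ s in (0:ℝ)..sf, -(g' s) * g s ^ ℓ / c := hmono
    _ = (-(1/(c*((ℓ:ℝ)+1)))) * (g sf ^ (ℓ+1) - g 0 ^ (ℓ+1)) := hval
    _ ≤ Real.exp γ / (mmu + mlam) * g 0 ^ (ℓ+1) / ((ℓ:ℝ)+1) := hfinal
end

section
/- Let γ > 0, ε ∈ {−1, 1}, and 0 < m_μ ≤ M_μ with M_μ/m_μ < exp(2γ − e^{−γ}), and let μ₁, μ₂ : [0,1] → ℝ be continuous with m_μ ≤ μᵢ(r) ≤ M_μ for all r ∈ [0,1] and i ∈ {1,2}. Let s_F ≥ 0 and let χ̂, ζ̂ : [0, s_F] → [0,1] be differentiable with χ̂'(s) = ε μ₁(χ̂(s)) and ζ̂'(s) = ε μ₂(ζ̂(s)) for all s. Define Φ(a,b) = exp(a e^{−γε}) − exp(b e^{γε}) + exp(e^γ). Then m_μ e^γ − M_μ e^{e^{−γ} − γ} > 0, and for every integer ℓ ≥ 0: ∫₀^{s_F} Φ(χ̂(s), ζ̂(s))^ℓ ds ≤ Φ(χ̂(0),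 ζ̂(0))^{ℓ+1} / ((m_μ e^γ − M_μ e^{e^{−γ} − γ})(ℓ+1)). -/
open MeasureTheory Set Filter

open MeasureTheory Set Filter

lemma gronwall_aux (sF c : ℝ) (hsF : 0 ≤ sF) (hc : 0 < c)
    (g g' : ℝ → ℝ)
    (hgd : ∀ s ∈ Set.Icc 0 sF, HasDerivWithinAt g (g' s) (Set.Icc 0 sF) s)
    (hg'c : ContinuousOn g' (Set.Icc 0 sF))
    (hg0 : ∀ s ∈ Set.Icc 0 sF, 0 ≤ g s)
    (hg' : ∀ s ∈ Set.Icc 0 sF, g' s ≤ -c)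
    (ℓ : ℕ) :
    ∫ s in (0:ℝ)..sF, g s ^ ℓ ≤ g 0 ^ (ℓ + 1) / (c * ((ℓ:ℝ) + 1)) := by
  have hz : (0:ℝ) ∈ Set.Icc 0 sF := ⟨le_refl _, hsF⟩
  have hzF : sF ∈ Set.Icc 0 sF := ⟨hsF, le_refl _⟩
  have huIcc : Set.uIcc (0:ℝ) sF = Set.Icc 0 sF := Set.uIcc_of_le hsF
  have hgc : ContinuousOn g (Set.Icc 0 sF) := fun s hs => (hgd s hs).continuousWithinAt
  have hint1 : IntervalIntegrable (fun s => g s ^ ℓ) volume 0 sF := by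
    apply ContinuousOn.intervalIntegrable; rw [huIcc]; exact hgc.pow ℓ
  set F' : ℝ → ℝ := fun s => ((ℓ:ℝ) + 1) * g s ^ ℓ * g' s with hF'
  have hFd : ∀ s ∈ Set.Icc 0 sF,
      HasDerivWithinAt (fun s => g s ^ (ℓ + 1)) (F' s) (Set.Icc 0 sF) s := by
    intro s hs
    have := (hgd s hs).fun_pow (ℓ + 1)
    simpa [hF'] using this
  have hF'int : IntervalIntegrable F' volume 0 sF := by
    apply ContinuousOn.intervalIntegrable; rw [huIcc]
    exact (continuousOn_const.mul (hgc.pow ℓ)).mul hg'c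
  have hftc : ∫ s in (0:ℝ)..sF, F' s = g sF ^ (ℓ + 1) - g 0 ^ (ℓ + 1) := by
    apply intervalIntegral.integral_eq_sub_of_hasDeriv_right_of_le hsF
      (hgc.pow (ℓ + 1)) _ hF'int
    intro x hx
    exact ((hFd x (Set.Ioo_subset_Icc_self hx)).hasDerivAt
      (Icc_mem_nhds hx.1 hx.2)).hasDerivWithinAt
  have hmono : ∫ s in (0:ℝ)..sF, (c * ((ℓ:ℝ) + 1)) * g s ^ ℓ
      ≤ ∫ s in (0:ℝ)..sF, -F' s := by
    apply intervalIntegral.integral_mono_on hsF (hint1.const_mul _) hF'int.neg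
    intro s hs
    have h1 : c ≤ -g' s := by linarith [hg' s hs]
    have h2 : (0:ℝ) ≤ ((ℓ:ℝ) + 1) * g s ^ ℓ := by
      have := pow_nonneg (hg0 s hs) ℓ; positivity
    have h3 := mul_le_mul_of_nonneg_left h1 h2
    simp only [Pi.neg_apply, hF']
    nlinarith [h3]
  have hL : ∫ s in (0:ℝ)..sF, (c * ((ℓ:ℝ) + 1)) * g s ^ ℓ
      = (c * ((ℓ:ℝ) + 1)) * ∫ s in (0:ℝ)..sF, g s ^ ℓ :=
    intervalIntegral.integral_const_mul _ _
  have hR : ∫ s in (0:ℝ)..sF, -F' s = -(g sF ^ (ℓ + 1) - g 0 ^ (ℓ + 1)) := by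
    rw [intervalIntegral.integral_neg, hftc]
  have hFsF : (0:ℝ) ≤ g sF ^ (ℓ + 1) := pow_nonneg (hg0 sF hzF) _
  have key : (c * ((ℓ:ℝ) + 1)) * ∫ s in (0:ℝ)..sF, g s ^ ℓ ≤ g 0 ^ (ℓ + 1) := by
    rw [← hL]
    calc ∫ s in (0:ℝ)..sF, (c * ((ℓ:ℝ) + 1)) * g s ^ ℓ
        ≤ ∫ s in (0:ℝ)..sF, -F' s := hmono
      _ = -(g sF ^ (ℓ + 1) - g 0 ^ (ℓ + 1)) := hR
      _ ≤ g 0 ^ (ℓ + 1) := by linarith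
  rw [le_div_iff₀ (by positivity)]
  nlinarith [key]
open MeasureTheory Set Filter

lemma upper_term (γ M μ x : ℝ) (hμM : μ ≤ M) (hμ0 : 0 ≤ μ) (hx : x ≤ 1) :
    Real.exp (x * Real.exp (-γ)) * (μ * Real.exp (-γ))
      ≤ M * Real.exp (Real.exp (-γ) - γ) := by
  have he : Real.exp (x * Real.exp (-γ)) ≤ Real.exp (Real.exp (-γ)) := by
    apply Real.exp_le_exp.mpr
    nlinarith [Real.exp_pos (-γ)]
  calc Real.exp (x * Real.exp (-γ)) * (μ * Real.exp (-γ))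
      ≤ Real.exp (Real.exp (-γ)) * (M * Real.exp (-γ)) := by
        apply mul_le_mul he
          (mul_le_mul_of_nonneg_right hμM (Real.exp_pos _).le)
          (by positivity) (Real.exp_pos _).le
    _ = M * Real.exp (Real.exp (-γ) - γ) := by
        rw [Real.exp_sub, Real.exp_neg]
        field_simp

lemma lower_term (γ m μ x : ℝ) (hm : m ≤ μ) (hm0 : 0 ≤ m) (hx : 0 ≤ x) :
    m * Real.exp γ ≤ Real.exp (x * Real.exp γ) * (μ * Real.exp γ) := by
  have h1 : (1:ℝ) ≤ Real.exp (x * Real.exp γ) := Real.one_le_exp (by positivity)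
  have h2 : m * Real.exp γ ≤ μ * Real.exp γ :=
    mul_le_mul_of_nonneg_right hm (Real.exp_pos _).le
  have h3 : (0:ℝ) ≤ μ * Real.exp γ := by nlinarith [Real.exp_pos γ]
  calc m * Real.exp γ ≤ μ * Real.exp γ := h2
    _ = 1 * (μ * Real.exp γ) := (one_mul _).symm
    _ ≤ Real.exp (x * Real.exp γ) * (μ * Real.exp γ) :=
        mul_le_mul_of_nonneg_right h1 h3

/-- along the characteristic projections `χ̂' = ε μ₁(χ̂)`,
`ζ̂' = ε μ₂(ζ̂)` of the L-kernel equation, with `0 < m_μ ≤ μᵢ ≤ M_μ` and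
`M_μ/m_μ < exp(2γ − e^{−γ})`, the constant `m_μ e^γ − M_μ e^{e^{−γ}−γ}` is
positive and the weight `Φ(a,b) = exp(a e^{−γε}) − exp(b e^{γε}) + exp(e^γ)`
satisfies, for every integer `ℓ ≥ 0`,
`∫₀^{s_F} Φ(χ̂(s),ζ̂(s))^ℓ ds ≤ Φ(χ̂(0),ζ̂(0))^{ℓ+1}/((m_μ e^γ − M_μ e^{e^{−γ}−γ})(ℓ+1))`. -/
theorem stmt_15 (γ ε mmu Mmu : ℝ) (hγ : 0 < γ) (hε : ε = -1 ∨ ε = 1)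
    (hmmu : 0 < mmu) (hmM : mmu ≤ Mmu)
    (hratio : Mmu / mmu < Real.exp (2 * γ - Real.exp (-γ)))
    (mu₁ mu₂ : ℝ → ℝ)
    (hmu₁c : ContinuousOn mu₁ (Set.Icc (0:ℝ) 1))
    (hmu₂c : ContinuousOn mu₂ (Set.Icc (0:ℝ) 1))
    (hmu₁b : ∀ r ∈ Set.Icc (0:ℝ) 1, mmu ≤ mu₁ r ∧ mu₁ r ≤ Mmu)
    (hmu₂b : ∀ r ∈ Set.Icc (0:ℝ) 1, mmu ≤ mu₂ r ∧ mu₂ r ≤ Mmu)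
    (sF : ℝ) (hsF : 0 ≤ sF)
    (χhat ζhat : ℝ → ℝ)
    (hχr : ∀ s ∈ Set.Icc 0 sF, χhat s ∈ Set.Icc (0:ℝ) 1)
    (hζr : ∀ s ∈ Set.Icc 0 sF, ζhat s ∈ Set.Icc (0:ℝ) 1)
    (hχd : ∀ s ∈ Set.Icc 0 sF,
      HasDerivWithinAt χhat (ε * mu₁ (χhat s)) (Set.Icc 0 sF) s)
    (hζd : ∀ s ∈ Set.Icc 0 sF,
      HasDerivWithinAt ζhat (ε * mu₂ (ζhat s)) (Set.Icc 0 sF) s)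
    (Φ : ℝ → ℝ → ℝ)
    (hΦ : ∀ a b : ℝ, Φ a b =
      Real.exp (a * Real.exp (-γ * ε)) - Real.exp (b * Real.exp (γ * ε)) +
        Real.exp (Real.exp γ)) :
    0 < mmu * Real.exp γ - Mmu * Real.exp (Real.exp (-γ) - γ) ∧
    ∀ ℓ : ℕ, ∫ s in (0:ℝ)..sF, (Φ (χhat s) (ζhat s)) ^ ℓ
      ≤ (Φ (χhat 0) (ζhat 0)) ^ (ℓ + 1) /
          ((mmu * Real.exp γ - Mmu * Real.exp (Real.exp (-γ) - γ)) * (ℓ + 1)) := by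
  set c := mmu * Real.exp γ - Mmu * Real.exp (Real.exp (-γ) - γ) with hcdef
  have hcpos : 0 < c := by
    have h1 : Mmu < Real.exp (2 * γ - Real.exp (-γ)) * mmu := (div_lt_iff₀ hmmu).mp hratio
    have h2 : Real.exp (2 * γ - Real.exp (-γ)) * Real.exp (Real.exp (-γ) - γ)
        = Real.exp γ := by rw [← Real.exp_add]; congr 1; ring
    have h3 := mul_lt_mul_of_pos_right h1 (Real.exp_pos (Real.exp (-γ) - γ))
    rw [hcdef]
    nlinarith [h3, h2, Real.exp_pos (Real.exp (-γ) - γ)]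
  refine ⟨hcpos, ?_⟩
  set A := Real.exp (-γ * ε) with hA
  set B := Real.exp (γ * ε) with hB
  set g : ℝ → ℝ := fun s =>
    Real.exp (χhat s * A) - Real.exp (ζhat s * B) + Real.exp (Real.exp γ) with hg
  set g' : ℝ → ℝ := fun s =>
    Real.exp (χhat s * A) * (ε * mu₁ (χhat s) * A)
      - Real.exp (ζhat s * B) * (ε * mu₂ (ζhat s) * B) with hg'
  have hgd : ∀ s ∈ Set.Icc 0 sF, HasDerivWithinAt g (g' s) (Set.Icc 0 sF) s := by
    intro s hs
    exact ((((hχd s hs).mul_const A).exp).sub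
      (((hζd s hs).mul_const B).exp)).add_const _
  have hχc : ContinuousOn χhat (Set.Icc 0 sF) :=
    fun s hs => (hχd s hs).continuousWithinAt
  have hζc : ContinuousOn ζhat (Set.Icc 0 sF) :=
    fun s hs => (hζd s hs).continuousWithinAt
  have hmu₁χ : ContinuousOn (fun s => mu₁ (χhat s)) (Set.Icc 0 sF) :=
    hmu₁c.comp hχc hχr
  have hmu₂ζ : ContinuousOn (fun s => mu₂ (ζhat s)) (Set.Icc 0 sF) :=
    hmu₂c.comp hζc hζr
  have hg'c : ContinuousOn g' (Set.Icc 0 sF) := by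
    rw [hg']
    exact ((ContinuousOn.rexp (hχc.mul continuousOn_const)).mul
        ((continuousOn_const.mul hmu₁χ).mul continuousOn_const)).sub
      ((ContinuousOn.rexp (hζc.mul continuousOn_const)).mul
        ((continuousOn_const.mul hmu₂ζ).mul continuousOn_const))
  have hgnn : ∀ s ∈ Set.Icc 0 sF, 0 ≤ g s := by
    intro s hs
    obtain ⟨hζ0, hζ1⟩ := hζr s hs
    have hBle : ζhat s * B ≤ Real.exp γ := by
      rcases hε with h | h
      · have hBval : B = Real.exp (-γ) := by rw [hB, h]; norm_num
        rw [hBval]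
        have h1 : Real.exp (-γ) ≤ Real.exp γ := Real.exp_le_exp.mpr (by linarith)
        nlinarith [Real.exp_pos (-γ)]
      · have hBval : B = Real.exp γ := by rw [hB, h]; norm_num
        rw [hBval]
        nlinarith [Real.exp_pos γ]
    have h2 : Real.exp (ζhat s * B) ≤ Real.exp (Real.exp γ) :=
      Real.exp_le_exp.mpr hBle
    have h3 : 0 < Real.exp (χhat s * A) := Real.exp_pos _
    simp only [hg]
    linarith
  have hg'b : ∀ s ∈ Set.Icc 0 sF, g' s ≤ -c := by
    intro s hs
    obtain ⟨hχ0, hχ1⟩ := hχr s hs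
    obtain ⟨hζ0, hζ1⟩ := hζr s hs
    obtain ⟨hb1l, hb1u⟩ := hmu₁b _ (hχr s hs)
    obtain ⟨hb2l, hb2u⟩ := hmu₂b _ (hζr s hs)
    have hμ1nn : 0 ≤ mu₁ (χhat s) := le_trans hmmu.le hb1l
    have hμ2nn : 0 ≤ mu₂ (ζhat s) := le_trans hmmu.le hb2l
    rcases hε with h | h
    · have hAval : A = Real.exp γ := by rw [hA, h]; norm_num
      have hBval : B = Real.exp (-γ) := by rw [hB, h]; norm_num
      have hlow := lower_term γ mmu (mu₁ (χhat s)) (χhat s) hb1l hmmu.le hχ0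
      have hup := upper_term γ Mmu (mu₂ (ζhat s)) (ζhat s) hb2u hμ2nn hζ1
      simp only [hg', hAval, hBval, h, hcdef]
      nlinarith [hlow, hup]
    · have hAval : A = Real.exp (-γ) := by rw [hA, h]; norm_num
      have hBval : B = Real.exp γ := by rw [hB, h]; norm_num
      have hlow := lower_term γ mmu (mu₂ (ζhat s)) (ζhat s) hb2l hmmu.le hζ0
      have hup := upper_term γ Mmu (mu₁ (χhat s)) (χhat s) hb1u hμ1nn hχ1
      simp only [hg', hAval, hBval, h, hcdef]
      nlinarith [hlow, hup]
  intro ℓ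
  have hmain := gronwall_aux sF c hsF hcpos g g' hgd hg'c hgnn hg'b ℓ
  simp only [hΦ, ← hA, ← hB]
  simpa only [hg] using hmain
end

section
/- Let 𝒯 = {(x,ξ) ∈ [0,1]² : ξ ≤ x}, and let L : [0,1]⁴ → ℝ be measurable such that for every (x,ξ) ∈ 𝒯 the function L(x,ξ,·,·) lies in L²([0,1]²;ℝ) with ‖L(x,ξ,·,·)‖_{L²([0,1]²)} ≤ M for a fixed constant M ≥ 0. Define iterated kernels by L₁(x,ξ,η) = ∫₀¹ L(x,ξ,η,ζ) dζ and, for ℓ ≥ 2, L_ℓ(x,ξ,η) = ∫_ξ^x ∫₀¹ L(x,s,η,ζ) L_{ℓ−1}(s,ξ,ζ) dζ ds. Then for every integer ℓ ≥ 1 and every (x,ξ) ∈ 𝒯: ‖L_ℓ(x,ξ,·)‖_{L²([0,1])} ≤ M^ℓ (x−ξ)^{ℓ−1} / (ℓ−1)!. -/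
open MeasureTheory Set Filter

/-- The Volterra iterates of the backstepping kernel `L`:
`Lit L 0 = L₁` with `L₁(x,ξ,η) = ∫₀¹ L(x,ξ,η,ζ) dζ`, and
`Lit L ℓ = L_{ℓ+1}` with `L_{ℓ+1}(x,ξ,η) = ∫_ξ^x ∫₀¹ L(x,s,η,ζ) L_ℓ(s,ξ,ζ) dζ ds`. -/
noncomputable def Lit (L : ℝ → ℝ → ℝ → ℝ → ℝ) : ℕ → ℝ → ℝ → ℝ → ℝ
  | 0 => fun x ξ η => ∫ ζ in (0:ℝ)..1, L x ξ η ζ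
  | (ℓ + 1) => fun x ξ η => ∫ s in ξ..x, ∫ ζ in (0:ℝ)..1, L x s η ζ * Lit L ℓ s ξ ζ

open scoped ENNReal

private lemma lit_meas (L : ℝ → ℝ → ℝ → ℝ → ℝ)
    (hmeas : Measurable (fun p : ℝ × ℝ × ℝ × ℝ => L p.1 p.2.1 p.2.2.1 p.2.2.2)) :
    ∀ ℓ : ℕ, Measurable (fun p : ℝ × ℝ × ℝ => Lit L ℓ p.1 p.2.1 p.2.2) := by
  intro ℓ
  induction ℓ with
  | zero =>
      have h : (fun p : ℝ × ℝ × ℝ => Lit L 0 p.1 p.2.1 p.2.2)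
          = fun p : ℝ × ℝ × ℝ => ∫ ζ in Ioc (0:ℝ) 1, L p.1 p.2.1 p.2.2 ζ := by
        funext p
        simp [Lit, intervalIntegral.integral_of_le (zero_le_one (α := ℝ))]
      rw [h]
      apply StronglyMeasurable.measurable
      exact MeasureTheory.StronglyMeasurable.integral_prod_right'
        (f := fun q : (ℝ × ℝ × ℝ) × ℝ => L q.1.1 q.1.2.1 q.1.2.2 q.2)
        (hmeas.comp ((measurable_fst.fst).prodMk ((measurable_fst.snd.fst).prodMk
          ((measurable_fst.snd.snd).prodMk measurable_snd)))).stronglyMeasurable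
  | succ ℓ ih =>
      set G : (ℝ × ℝ × ℝ) × ℝ → ℝ :=
        fun q => ∫ ζ in Ioc (0:ℝ) 1, L q.1.1 q.2 q.1.2.2 ζ * Lit L ℓ q.2 q.1.2.1 ζ with hGdef
      have hG : Measurable G := by
        apply StronglyMeasurable.measurable
        apply MeasureTheory.StronglyMeasurable.integral_prod_right'
          (f := fun r : ((ℝ × ℝ × ℝ) × ℝ) × ℝ =>
            L r.1.1.1 r.1.2 r.1.1.2.2 r.2 * Lit L ℓ r.1.2 r.1.1.2.1 r.2)
        apply Measurable.stronglyMeasurable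
        have h1 : Measurable fun r : ((ℝ × ℝ × ℝ) × ℝ) × ℝ => L r.1.1.1 r.1.2 r.1.1.2.2 r.2 :=
          hmeas.comp ((measurable_fst.fst.fst).prodMk ((measurable_fst.snd).prodMk
            ((measurable_fst.fst.snd.snd).prodMk measurable_snd)))
        have h2 : Measurable fun r : ((ℝ × ℝ × ℝ) × ℝ) × ℝ => Lit L ℓ r.1.2 r.1.1.2.1 r.2 :=
          ih.comp ((measurable_fst.snd).prodMk ((measurable_fst.fst.snd.fst).prodMk
            measurable_snd))
        exact h1.mul h2
      have h : (fun p : ℝ × ℝ × ℝ => Lit L (ℓ+1) p.1 p.2.1 p.2.2)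
          = fun p : ℝ × ℝ × ℝ =>
            (∫ s in Ioc p.2.1 p.1, G (p, s)) - ∫ s in Ioc p.1 p.2.1, G (p, s) := by
        funext p
        show Lit L (ℓ+1) p.1 p.2.1 p.2.2 = _
        rw [show Lit L (ℓ+1) p.1 p.2.1 p.2.2
            = ∫ s in p.2.1..p.1, ∫ ζ in (0:ℝ)..1, L p.1 s p.2.2 ζ * Lit L ℓ s p.2.1 ζ from rfl]
        rw [intervalIntegral]
        congr 1 <;> refine setIntegral_congr_fun measurableSet_Ioc (fun s _ => ?_) <;>
          simp [hGdef, intervalIntegral.integral_of_le (zero_le_one (α := ℝ))]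
      rw [h]
      have key : ∀ (A B : ℝ × ℝ × ℝ → ℝ) (hA : Measurable fun p => (A p, B p)),
          Measurable (fun p : ℝ × ℝ × ℝ => ∫ s in Ioc (A p) (B p), G (p, s)) := by
        intro A B hAB
        have : (fun p : ℝ × ℝ × ℝ => ∫ s in Ioc (A p) (B p), G (p, s))
            = fun p : ℝ × ℝ × ℝ =>
              ∫ s, (if s ∈ Ioc (A p) (B p) then G (p, s) else 0) ∂(volume : Measure ℝ) := by
          funext p
          rw [← MeasureTheory.integral_indicator measurableSet_Ioc]
          congr 1
          funext s
          simp [Set.indicator_apply]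
        rw [this]
        apply StronglyMeasurable.measurable
        apply MeasureTheory.StronglyMeasurable.integral_prod_right'
          (f := fun q : (ℝ × ℝ × ℝ) × ℝ =>
            if q.2 ∈ Ioc (A q.1) (B q.1) then G q else 0)
        apply Measurable.stronglyMeasurable
        apply Measurable.ite _ hG measurable_const
        have : {q : (ℝ × ℝ × ℝ) × ℝ | q.2 ∈ Ioc (A q.1) (B q.1)}
            = {q | A q.1 < q.2} ∩ {q | q.2 ≤ B q.1} := by ext q; simp [Set.mem_Ioc]
        rw [this]
        exact ((measurableSet_lt ((hAB.comp measurable_fst).fst) measurable_snd)).inter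
          (measurableSet_le measurable_snd ((hAB.comp measurable_fst).snd))
      exact (key _ _ ((measurable_snd.fst).prodMk measurable_fst)).sub
        (key _ _ (measurable_fst.prodMk measurable_snd.fst))

private lemma cs_helper {α : Type*} [MeasurableSpace α] (μ : Measure α) (f g : α → ℝ≥0∞)
    (hf : AEMeasurable f μ) (hg : AEMeasurable g μ) :
    (∫⁻ a, f a * g a ∂μ) ^ 2 ≤ (∫⁻ a, (f a) ^ 2 ∂μ) * (∫⁻ a, (g a) ^ 2 ∂μ) := by
  have hpq : Real.HolderConjugate 2 2 := Real.HolderConjugate.two_two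
  have h := ENNReal.lintegral_mul_le_Lp_mul_Lq μ hpq hf hg
  have h2 : ∀ F : α → ℝ≥0∞, (∫⁻ a, F a ^ (2:ℝ) ∂μ) = ∫⁻ a, F a ^ 2 ∂μ := by
    intro F
    congr 1
    funext a
    rw [show ((2:ℝ) = ((2:ℕ):ℝ)) by norm_num, ENNReal.rpow_natCast]
  rw [h2, h2] at h
  calc (∫⁻ a, f a * g a ∂μ) ^ 2
      ≤ ((∫⁻ a, f a ^ 2 ∂μ) ^ (1/2:ℝ) * (∫⁻ a, g a ^ 2 ∂μ) ^ (1/2:ℝ)) ^ 2 := by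
        exact pow_le_pow_left' h 2
    _ = (∫⁻ a, (f a) ^ 2 ∂μ) * (∫⁻ a, (g a) ^ 2 ∂μ) := by
        rw [mul_pow, ← ENNReal.rpow_natCast (_ ^ (1/2:ℝ)) 2, ← ENNReal.rpow_natCast (_ ^ (1/2:ℝ)) 2,
          ← ENNReal.rpow_mul, ← ENNReal.rpow_mul]
        norm_num

private lemma kernel_L2_bound (L : ℝ → ℝ → ℝ → ℝ → ℝ) (M : ℝ) (x ξ : ℝ)
    (hmeasx : Measurable (fun p : ℝ × ℝ => L x ξ p.1 p.2))
    (hmem : MemLp (fun p : ℝ × ℝ => L x ξ p.1 p.2) 2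
      (volume.restrict ((Icc (0:ℝ) 1) ×ˢ (Icc (0:ℝ) 1))))
    (hbound : Real.sqrt (∫ η in (0:ℝ)..1, ∫ ζ in (0:ℝ)..1, (L x ξ η ζ) ^ 2) ≤ M) :
    ∫⁻ η in Ioc (0:ℝ) 1, ∫⁻ ζ in Ioc (0:ℝ) 1, (‖L x ξ η ζ‖₊ : ℝ≥0∞) ^ 2
      ≤ ENNReal.ofReal (M ^ 2) := by
  set f : ℝ × ℝ → ℝ := fun p => L x ξ p.1 p.2 with hf
  set μI := volume.restrict ((Icc (0:ℝ) 1) ×ˢ (Icc (0:ℝ) 1)) with hμI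
  -- integrability of f^2 on Icc × Icc
  have hint : Integrable (fun p => f p ^ 2) μI := by
    have h := hmem.integrable_norm_rpow (by norm_num) (by norm_num)
    refine h.congr (ae_of_all _ fun p => ?_)
    show ‖f p‖ ^ ((2:ℝ≥0∞).toReal) = f p ^ 2
    rw [ENNReal.toReal_ofNat, show ((2:ℝ) = ((2:ℕ):ℝ)) from by norm_num, Real.rpow_natCast,
      Real.norm_eq_abs, sq_abs]
  -- the real double integral equals ∫ f^2 dμI
  have ha : (∫ η in (0:ℝ)..1, ∫ ζ in (0:ℝ)..1, (L x ξ η ζ) ^ 2) = ∫ p, f p ^ 2 ∂μI := by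
    have hprod : μI = (volume.restrict (Icc (0:ℝ) 1)).prod (volume.restrict (Icc (0:ℝ) 1)) := by
      rw [hμI, Measure.prod_restrict, ← Measure.volume_eq_prod]
    rw [hprod] at hint ⊢
    rw [MeasureTheory.integral_prod _ hint]
    rw [intervalIntegral.integral_of_le (zero_le_one (α := ℝ)),
      ← integral_Icc_eq_integral_Ioc]
    refine setIntegral_congr_fun measurableSet_Icc fun η _ => ?_
    rw [intervalIntegral.integral_of_le (zero_le_one (α := ℝ)), ← integral_Icc_eq_integral_Ioc]
  have ha_nonneg : 0 ≤ ∫ p, f p ^ 2 ∂μI := integral_nonneg fun p => sq_nonneg _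
  have haM : (∫ p, f p ^ 2 ∂μI) ≤ M ^ 2 := by
    rw [ha] at hbound
    calc (∫ p, f p ^ 2 ∂μI) = Real.sqrt (∫ p, f p ^ 2 ∂μI) ^ 2 := (Real.sq_sqrt ha_nonneg).symm
      _ ≤ M ^ 2 := pow_le_pow_left₀ (Real.sqrt_nonneg _) hbound 2
  -- convert to lintegral
  have hlin : (∫⁻ p, (‖f p‖₊ : ℝ≥0∞) ^ 2 ∂μI) = ENNReal.ofReal (∫ p, f p ^ 2 ∂μI) := by
    rw [ofReal_integral_eq_lintegral_ofReal hint (ae_of_all _ fun p => sq_nonneg _)]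
    congr 1
    funext p
    rw [show (f p) ^ 2 = |f p| ^ 2 by rw [sq_abs], ENNReal.ofReal_pow (abs_nonneg _),
      ← Real.enorm_eq_ofReal_abs, enorm_eq_nnnorm]
  -- iterated lintegral over Ioc × Ioc
  have hswap : (∫⁻ η in Ioc (0:ℝ) 1, ∫⁻ ζ in Ioc (0:ℝ) 1, (‖L x ξ η ζ‖₊ : ℝ≥0∞) ^ 2)
      = ∫⁻ p, (‖f p‖₊ : ℝ≥0∞) ^ 2
          ∂(volume.restrict ((Ioc (0:ℝ) 1) ×ˢ (Ioc (0:ℝ) 1))) := by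
    rw [show volume.restrict ((Ioc (0:ℝ) 1) ×ˢ (Ioc (0:ℝ) 1))
        = (volume.restrict (Ioc (0:ℝ) 1)).prod (volume.restrict (Ioc (0:ℝ) 1)) by
      rw [Measure.prod_restrict, ← Measure.volume_eq_prod]]
    rw [MeasureTheory.lintegral_prod _ (by
      exact ((measurable_coe_nnreal_ennreal.comp hmeasx.nnnorm).pow_const 2).aemeasurable)]
  rw [hswap]
  calc (∫⁻ p in (Ioc (0:ℝ) 1) ×ˢ (Ioc (0:ℝ) 1), (‖f p‖₊ : ℝ≥0∞) ^ 2)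
      ≤ ∫⁻ p, (‖f p‖₊ : ℝ≥0∞) ^ 2 ∂μI :=
        lintegral_mono' (Measure.restrict_mono
          (Set.prod_mono Ioc_subset_Icc_self Ioc_subset_Icc_self) le_rfl) le_rfl
    _ = ENNReal.ofReal (∫ p, f p ^ 2 ∂μI) := hlin
    _ ≤ ENNReal.ofReal (M ^ 2) := ENNReal.ofReal_le_ofReal haM

private lemma wint (ξ x : ℝ) (hξx : ξ ≤ x) (c : ℝ) (hc : 0 ≤ c) (n : ℕ) :
    ∫⁻ s in Ioc ξ x, ENNReal.ofReal (c * (s - ξ) ^ n)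
      = ENNReal.ofReal (c * ((x - ξ) ^ (n + 1) / (n + 1))) := by
  have hint : IntegrableOn (fun s => c * (s - ξ) ^ n) (Ioc ξ x) volume := by
    apply Continuous.integrableOn_Ioc
    continuity
  have hnn : 0 ≤ᵐ[volume.restrict (Ioc ξ x)] fun s => c * (s - ξ) ^ n := by
    refine (ae_restrict_iff' measurableSet_Ioc).2 (ae_of_all _ fun s hs => ?_)
    exact mul_nonneg hc (pow_nonneg (by linarith [hs.1]) n)
  rw [← ofReal_integral_eq_lintegral_ofReal hint hnn]
  congr 1
  rw [← intervalIntegral.integral_of_le hξx, intervalIntegral.integral_const_mul]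
  congr 1
  rw [intervalIntegral.integral_comp_sub_right (fun u => u ^ n) ξ, integral_pow]
  simp

private lemma key (L : ℝ → ℝ → ℝ → ℝ → ℝ) (M : ℝ) (hM : 0 ≤ M)
    (hmeas : Measurable (fun p : ℝ × ℝ × ℝ × ℝ => L p.1 p.2.1 p.2.2.1 p.2.2.2))
    (hK : ∀ x ξ : ℝ, ξ ≤ x → x ∈ Icc (0:ℝ) 1 → ξ ∈ Icc (0:ℝ) 1 →
      ∫⁻ η in Ioc (0:ℝ) 1, ∫⁻ ζ in Ioc (0:ℝ) 1, (‖L x ξ η ζ‖₊ : ℝ≥0∞) ^ 2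
        ≤ ENNReal.ofReal (M ^ 2)) :
    ∀ ℓ : ℕ, ∀ x ξ : ℝ, ξ ≤ x → x ∈ Icc (0:ℝ) 1 → ξ ∈ Icc (0:ℝ) 1 →
      (∫⁻ η in Ioc (0:ℝ) 1, (‖Lit L ℓ x ξ η‖₊ : ℝ≥0∞) ^ 2)
        ≤ ENNReal.ofReal ((M ^ (ℓ + 1) * (x - ξ) ^ ℓ / (Nat.factorial ℓ)) ^ 2) := by
  have hlit := lit_meas L hmeas
  have mLsec : ∀ a b c : ℝ, Measurable fun ζ => ((‖L a b c ζ‖₊ : ℝ≥0∞)) := fun a b c =>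
    (hmeas.comp (measurable_const.prodMk (measurable_const.prodMk
      (measurable_const.prodMk measurable_id)))).nnnorm.coe_nnreal_ennreal
  have mLitsec : ∀ ℓ (a b : ℝ), Measurable fun ζ => ((‖Lit L ℓ a b ζ‖₊ : ℝ≥0∞)) := fun ℓ a b =>
    ((hlit ℓ).comp (measurable_const.prodMk (measurable_const.prodMk
      measurable_id))).nnnorm.coe_nnreal_ennreal
  intro ℓ
  induction ℓ with
  | zero =>
    intro x ξ hξx hx hξ
    have hone : (∫⁻ (_ : ℝ) in Ioc (0:ℝ) 1, (1:ℝ≥0∞) ^ 2) = 1 := by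
      simp [Real.volume_Ioc]
    have step : ∀ η : ℝ, (‖Lit L 0 x ξ η‖₊ : ℝ≥0∞) ^ 2
        ≤ ∫⁻ ζ in Ioc (0:ℝ) 1, (‖L x ξ η ζ‖₊ : ℝ≥0∞) ^ 2 := by
      intro η
      have h1 : (‖Lit L 0 x ξ η‖₊ : ℝ≥0∞) ≤ ∫⁻ ζ in Ioc (0:ℝ) 1, (‖L x ξ η ζ‖₊ : ℝ≥0∞) := by
        show (‖∫ ζ in (0:ℝ)..1, L x ξ η ζ‖₊ : ℝ≥0∞) ≤ _
        rw [intervalIntegral.integral_of_le (zero_le_one (α := ℝ))]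
        exact enorm_integral_le_lintegral_enorm _
      calc (‖Lit L 0 x ξ η‖₊ : ℝ≥0∞) ^ 2
          ≤ (∫⁻ ζ in Ioc (0:ℝ) 1, (‖L x ξ η ζ‖₊ : ℝ≥0∞)) ^ 2 := pow_le_pow_left' h1 2
        _ = (∫⁻ ζ in Ioc (0:ℝ) 1, 1 * (‖L x ξ η ζ‖₊ : ℝ≥0∞)) ^ 2 := by simp
        _ ≤ (∫⁻ (_ : ℝ) in Ioc (0:ℝ) 1, (1:ℝ≥0∞) ^ 2)
            * (∫⁻ ζ in Ioc (0:ℝ) 1, (‖L x ξ η ζ‖₊ : ℝ≥0∞) ^ 2) :=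
            cs_helper _ _ _ aemeasurable_const (mLsec x ξ η).aemeasurable
        _ = _ := by rw [hone, one_mul]
    calc (∫⁻ η in Ioc (0:ℝ) 1, (‖Lit L 0 x ξ η‖₊ : ℝ≥0∞) ^ 2)
        ≤ ∫⁻ η in Ioc (0:ℝ) 1, ∫⁻ ζ in Ioc (0:ℝ) 1, (‖L x ξ η ζ‖₊ : ℝ≥0∞) ^ 2 :=
          lintegral_mono step
      _ ≤ ENNReal.ofReal (M ^ 2) := hK x ξ hξx hx hξ
      _ = _ := by norm_num [Nat.factorial]
  | succ ℓ ih =>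
    intro x ξ hξx hx hξ
    have hF : ((Nat.factorial ℓ : ℝ)) ≠ 0 := Nat.cast_ne_zero.2 (Nat.factorial_ne_zero ℓ)
    set t := x - ξ with ht
    have ht0 : 0 ≤ t := sub_nonneg.2 hξx
    set Cb : ℝ := (M ^ (ℓ + 1) / (Nat.factorial ℓ : ℝ)) ^ 2 with hCb
    have hCb0 : 0 ≤ Cb := sq_nonneg _
    set g : ℝ → ℝ → ℝ≥0∞ := fun s η =>
      ∫⁻ ζ in Ioc (0:ℝ) 1, (‖L x s η ζ‖₊ : ℝ≥0∞) * (‖Lit L ℓ s ξ ζ‖₊ : ℝ≥0∞) with hg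
    set w : ℝ → ℝ≥0∞ := fun s => ENNReal.ofReal (Real.sqrt ((s - ξ) ^ ℓ)) with hw
    -- measurability
    have mg2 : Measurable (fun q : ℝ × ℝ => g q.1 q.2) := by
      apply Measurable.lintegral_prod_right'
        (f := fun q : (ℝ × ℝ) × ℝ => (‖L x q.1.1 q.1.2 q.2‖₊ : ℝ≥0∞)
          * (‖Lit L ℓ q.1.1 ξ q.2‖₊ : ℝ≥0∞))
      exact Measurable.mul
        ((hmeas.comp (measurable_const.prodMk ((measurable_fst.fst).prodMk
          ((measurable_fst.snd).prodMk measurable_snd)))).nnnorm.coe_nnreal_ennreal)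
        (((hlit ℓ).comp ((measurable_fst.fst).prodMk (measurable_const.prodMk
          measurable_snd))).nnnorm.coe_nnreal_ennreal)
    have mgs : ∀ η, Measurable fun s => g s η := fun η =>
      mg2.comp (measurable_id.prodMk measurable_const)
    have mw : Measurable w := by
      apply Measurable.ennreal_ofReal
      exact (measurable_id.sub_const ξ).pow_const ℓ |>.sqrt
    -- pointwise bound on the (ℓ+1)-st iterate
    have hA : ∀ η, (‖Lit L (ℓ+1) x ξ η‖₊ : ℝ≥0∞) ≤ ∫⁻ s in Ioc ξ x, g s η := by
      intro η
      show (‖∫ s in ξ..x, ∫ ζ in (0:ℝ)..1, L x s η ζ * Lit L ℓ s ξ ζ‖₊ : ℝ≥0∞) ≤ _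
      rw [intervalIntegral.integral_of_le hξx]
      refine le_trans (enorm_integral_le_lintegral_enorm _) (lintegral_mono fun s => ?_)
      show (‖∫ ζ in (0:ℝ)..1, L x s η ζ * Lit L ℓ s ξ ζ‖₊ : ℝ≥0∞) ≤ g s η
      rw [intervalIntegral.integral_of_le (zero_le_one (α := ℝ))]
      refine le_trans (enorm_integral_le_lintegral_enorm _) (lintegral_mono fun ζ => ?_)
      simp [nnnorm_mul, ENNReal.coe_mul]
      exact le_rfl
    -- weight facts
    have hwsq : ∀ s ∈ Ioc ξ x, (w s) ^ 2 = ENNReal.ofReal ((s - ξ) ^ ℓ) := by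
      intro s hs
      rw [hw, ← ENNReal.ofReal_pow (Real.sqrt_nonneg _),
        Real.sq_sqrt (pow_nonneg (by linarith [hs.1]) ℓ)]
    have hwne : ∀ s ∈ Ioc ξ x, w s ≠ 0 ∧ w s ≠ ∞ := by
      intro s hs
      refine ⟨?_, ENNReal.ofReal_ne_top⟩
      simp only [hw, ne_eq, ENNReal.ofReal_eq_zero, not_le]
      exact Real.sqrt_pos.2 (pow_pos (by linarith [hs.1]) ℓ)
    -- Cauchy–Schwarz in s for fixed η
    have hCS : ∀ η, (∫⁻ s in Ioc ξ x, g s η) ^ 2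
        ≤ ENNReal.ofReal (t ^ (ℓ+1) / ((ℓ:ℝ)+1))
          * ∫⁻ s in Ioc ξ x, (g s η) ^ 2 * ((w s) ^ 2)⁻¹ := by
      intro η
      have hcong : (∫⁻ s in Ioc ξ x, g s η) = ∫⁻ s in Ioc ξ x, w s * (g s η / w s) := by
        refine setLIntegral_congr_fun measurableSet_Ioc (fun s hs => ?_)
        rw [ENNReal.mul_div_cancel' (fun h => absurd h (hwne s hs).1) (fun h => absurd h (hwne s hs).2)]
      rw [hcong]
      refine le_trans (cs_helper _ _ _ mw.aemeasurable
        (((mgs η).div mw).aemeasurable)) ?_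
      have h1 : (∫⁻ s in Ioc ξ x, (w s) ^ 2) = ENNReal.ofReal (t ^ (ℓ+1) / ((ℓ:ℝ)+1)) := by
        rw [setLIntegral_congr_fun measurableSet_Ioc hwsq]
        have h := wint ξ x hξx 1 zero_le_one ℓ
        simp only [one_mul] at h
        rw [h]
      have h2 : (∫⁻ s in Ioc ξ x, (g s η / w s) ^ 2)
          = ∫⁻ s in Ioc ξ x, (g s η) ^ 2 * ((w s) ^ 2)⁻¹ := by
        refine lintegral_congr fun s => ?_
        rw [div_eq_mul_inv, mul_pow, ENNReal.inv_pow]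
      rw [h1, h2]
    -- inner bound for s ∈ Ioc ξ x
    have hinner : ∀ s ∈ Ioc ξ x,
        (∫⁻ η in Ioc (0:ℝ) 1, (g s η) ^ 2) * ((w s) ^ 2)⁻¹
          ≤ ENNReal.ofReal ((M ^ 2 * Cb) * (s - ξ) ^ ℓ) := by
      intro s hs
      have hs0 : (0:ℝ) ≤ s - ξ := by linarith [hs.1]
      have hsx : s ≤ x := hs.2
      have hsI : s ∈ Icc (0:ℝ) 1 := ⟨le_trans hξ.1 (le_of_lt hs.1), le_trans hs.2 hx.2⟩
      have hQ : (∫⁻ ζ in Ioc (0:ℝ) 1, (‖Lit L ℓ s ξ ζ‖₊ : ℝ≥0∞) ^ 2)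
          ≤ ENNReal.ofReal (Cb * ((s - ξ) ^ ℓ) ^ 2) := by
        refine le_trans (ih s ξ (le_of_lt hs.1) hsI hξ) (le_of_eq ?_)
        congr 1
        rw [hCb]; ring
      have hgsq : ∀ η, (g s η) ^ 2
          ≤ (∫⁻ ζ in Ioc (0:ℝ) 1, (‖L x s η ζ‖₊ : ℝ≥0∞) ^ 2)
            * (∫⁻ ζ in Ioc (0:ℝ) 1, (‖Lit L ℓ s ξ ζ‖₊ : ℝ≥0∞) ^ 2) := fun η =>
        cs_helper _ _ _ (mLsec x s η).aemeasurable (mLitsec ℓ s ξ).aemeasurable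
      have hη : (∫⁻ η in Ioc (0:ℝ) 1, (g s η) ^ 2)
          ≤ ENNReal.ofReal (M ^ 2) * ENNReal.ofReal (Cb * ((s - ξ) ^ ℓ) ^ 2) := by
        calc (∫⁻ η in Ioc (0:ℝ) 1, (g s η) ^ 2)
            ≤ ∫⁻ η in Ioc (0:ℝ) 1,
                (∫⁻ ζ in Ioc (0:ℝ) 1, (‖L x s η ζ‖₊ : ℝ≥0∞) ^ 2)
                * (∫⁻ ζ in Ioc (0:ℝ) 1, (‖Lit L ℓ s ξ ζ‖₊ : ℝ≥0∞) ^ 2) :=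
              lintegral_mono hgsq
          _ = (∫⁻ η in Ioc (0:ℝ) 1, ∫⁻ ζ in Ioc (0:ℝ) 1, (‖L x s η ζ‖₊ : ℝ≥0∞) ^ 2)
                * (∫⁻ ζ in Ioc (0:ℝ) 1, (‖Lit L ℓ s ξ ζ‖₊ : ℝ≥0∞) ^ 2) := by
              apply lintegral_mul_const''
              apply Measurable.aemeasurable
              exact Measurable.lintegral_prod_right'
                (f := fun q : ℝ × ℝ => ((‖L x s q.1 q.2‖₊ : ℝ≥0∞)) ^ 2)
                (((hmeas.comp (measurable_const.prodMk (measurable_const.prodMk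
                  (measurable_fst.prodMk measurable_snd)))).nnnorm.coe_nnreal_ennreal).pow_const 2)
          _ ≤ _ := mul_le_mul' (hK x s hsx hx hsI) hQ
      calc (∫⁻ η in Ioc (0:ℝ) 1, (g s η) ^ 2) * ((w s) ^ 2)⁻¹
          ≤ (ENNReal.ofReal (M ^ 2) * ENNReal.ofReal (Cb * ((s - ξ) ^ ℓ) ^ 2))
            * ((w s) ^ 2)⁻¹ := mul_le_mul_left hη _
        _ = ENNReal.ofReal ((M ^ 2 * Cb) * (s - ξ) ^ ℓ) := by
            rw [hwsq s hs, ← ENNReal.ofReal_mul (sq_nonneg M)]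
            rw [show M ^ 2 * (Cb * ((s - ξ) ^ ℓ) ^ 2)
                = ((M ^ 2 * Cb) * (s - ξ) ^ ℓ) * (s - ξ) ^ ℓ from by ring]
            rw [ENNReal.ofReal_mul (by positivity), mul_assoc,
              ENNReal.mul_inv_cancel ?h0 ENNReal.ofReal_ne_top, mul_one]
            case h0 =>
              simp only [ne_eq, ENNReal.ofReal_eq_zero, not_le]
              exact pow_pos (by linarith [hs.1]) ℓ
    have C1ne : ENNReal.ofReal (t ^ (ℓ+1) / ((ℓ:ℝ)+1)) ≠ ∞ := ENNReal.ofReal_ne_top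
    have hswap : (∫⁻ η in Ioc (0:ℝ) 1, ∫⁻ s in Ioc ξ x, (g s η) ^ 2 * ((w s) ^ 2)⁻¹)
        = ∫⁻ s in Ioc ξ x, ∫⁻ η in Ioc (0:ℝ) 1, (g s η) ^ 2 * ((w s) ^ 2)⁻¹ := by
      apply lintegral_lintegral_swap
      apply Measurable.aemeasurable
      exact ((mg2.comp (measurable_snd.prodMk measurable_fst)).pow_const 2).mul
        (((mw.comp measurable_snd).pow_const 2).inv)
    have hs_int : (∫⁻ s in Ioc ξ x, ∫⁻ η in Ioc (0:ℝ) 1, (g s η) ^ 2 * ((w s) ^ 2)⁻¹)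
        ≤ ENNReal.ofReal ((M ^ 2 * Cb) * (t ^ (ℓ+1) / ((ℓ:ℝ)+1))) := by
      calc (∫⁻ s in Ioc ξ x, ∫⁻ η in Ioc (0:ℝ) 1, (g s η) ^ 2 * ((w s) ^ 2)⁻¹)
          ≤ ∫⁻ s in Ioc ξ x, ENNReal.ofReal ((M ^ 2 * Cb) * (s - ξ) ^ ℓ) := by
            refine lintegral_mono_ae ((ae_restrict_iff' measurableSet_Ioc).2
              (ae_of_all _ fun s hs => ?_))
            have hm : AEMeasurable (fun η => g s η ^ 2) (volume.restrict (Ioc (0:ℝ) 1)) :=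
              ((mg2.comp (measurable_const.prodMk measurable_id)).pow_const 2).aemeasurable
            exact le_trans (le_of_eq (lintegral_mul_const'' _ hm)) (hinner s hs)
        _ = _ := wint ξ x hξx _ (by positivity) ℓ
    calc (∫⁻ η in Ioc (0:ℝ) 1, (‖Lit L (ℓ+1) x ξ η‖₊ : ℝ≥0∞) ^ 2)
        ≤ ∫⁻ η in Ioc (0:ℝ) 1, ENNReal.ofReal (t ^ (ℓ+1) / ((ℓ:ℝ)+1))
            * ∫⁻ s in Ioc ξ x, (g s η) ^ 2 * ((w s) ^ 2)⁻¹ :=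
          lintegral_mono fun η => le_trans (pow_le_pow_left' (hA η) 2) (hCS η)
      _ = ENNReal.ofReal (t ^ (ℓ+1) / ((ℓ:ℝ)+1))
            * ∫⁻ η in Ioc (0:ℝ) 1, ∫⁻ s in Ioc ξ x, (g s η) ^ 2 * ((w s) ^ 2)⁻¹ :=
          lintegral_const_mul' _ _ C1ne
      _ ≤ ENNReal.ofReal (t ^ (ℓ+1) / ((ℓ:ℝ)+1))
            * ENNReal.ofReal ((M ^ 2 * Cb) * (t ^ (ℓ+1) / ((ℓ:ℝ)+1))) := by
          rw [hswap]; exact mul_le_mul_right hs_int _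
      _ = ENNReal.ofReal ((M ^ (ℓ + 1 + 1) * t ^ (ℓ + 1) / (Nat.factorial (ℓ + 1) : ℝ)) ^ 2) := by
          rw [← ENNReal.ofReal_mul (by positivity)]
          congr 1
          rw [hCb, Nat.factorial_succ]
          have hl1 : ((ℓ:ℝ) + 1) ≠ 0 := by positivity
          push_cast
          field_simp
          ring


/-- if the kernel `L` is measurable and uniformly `L²`-bounded in
its last two variables over the triangle `𝒯 = {ξ ≤ x} ∩ [0,1]²`, then the
Volterra iterates satisfy `‖L_ℓ(x,ξ,·)‖_{L²} ≤ M^ℓ (x−ξ)^{ℓ−1}/(ℓ−1)!` (here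
`Lit L ℓ = L_{ℓ+1}`, so the bound reads `M^{ℓ+1}(x−ξ)^ℓ/ℓ!`). -/
theorem stmt_16 (L : ℝ → ℝ → ℝ → ℝ → ℝ) (M : ℝ) (hM : 0 ≤ M)
    (hmeas : Measurable (fun p : ℝ × ℝ × ℝ × ℝ => L p.1 p.2.1 p.2.2.1 p.2.2.2))
    (hL2 : ∀ x ξ : ℝ, ξ ≤ x → x ∈ Set.Icc (0:ℝ) 1 → ξ ∈ Set.Icc (0:ℝ) 1 →
      MeasureTheory.MemLp (fun p : ℝ × ℝ => L x ξ p.1 p.2) 2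
        (MeasureTheory.volume.restrict ((Set.Icc (0:ℝ) 1) ×ˢ (Set.Icc (0:ℝ) 1))) ∧
      Real.sqrt (∫ η in (0:ℝ)..1, ∫ ζ in (0:ℝ)..1, (L x ξ η ζ) ^ 2) ≤ M) :
    ∀ ℓ : ℕ, ∀ x ξ : ℝ, ξ ≤ x → x ∈ Set.Icc (0:ℝ) 1 → ξ ∈ Set.Icc (0:ℝ) 1 →
      Real.sqrt (∫ η in (0:ℝ)..1, (Lit L ℓ x ξ η) ^ 2)
        ≤ M ^ (ℓ + 1) * (x - ξ) ^ ℓ / (Nat.factorial ℓ) := by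
  intro ℓ x ξ hξx hx hξ
  have hmeasx : ∀ a b : ℝ, Measurable (fun p : ℝ × ℝ => L a b p.1 p.2) := fun a b =>
    hmeas.comp (measurable_const.prodMk (measurable_const.prodMk
      (measurable_fst.prodMk measurable_snd)))
  have hK : ∀ x ξ : ℝ, ξ ≤ x → x ∈ Icc (0:ℝ) 1 → ξ ∈ Icc (0:ℝ) 1 →
      ∫⁻ η in Ioc (0:ℝ) 1, ∫⁻ ζ in Ioc (0:ℝ) 1, (‖L x ξ η ζ‖₊ : ℝ≥0∞) ^ 2
        ≤ ENNReal.ofReal (M ^ 2) := fun a b hab ha hb =>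
    kernel_L2_bound L M a b (hmeasx a b) (hL2 a b hab ha hb).1 (hL2 a b hab ha hb).2
  have hkey := key L M hM hmeas hK ℓ x ξ hξx hx hξ
  set R : ℝ := M ^ (ℓ + 1) * (x - ξ) ^ ℓ / (Nat.factorial ℓ) with hR
  have hR0 : 0 ≤ R := by
    apply div_nonneg (mul_nonneg (pow_nonneg hM _) (pow_nonneg (by linarith) _))
    positivity
  have hfm : Measurable fun η => Lit L ℓ x ξ η :=
    (lit_meas L hmeas ℓ).comp (measurable_const.prodMk (measurable_const.prodMk measurable_id))
  have hnn : ∀ η : ℝ, ENNReal.ofReal ((Lit L ℓ x ξ η) ^ 2)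
      = (‖Lit L ℓ x ξ η‖₊ : ℝ≥0∞) ^ 2 := by
    intro η
    rw [show (Lit L ℓ x ξ η) ^ 2 = |Lit L ℓ x ξ η| ^ 2 from (sq_abs _).symm,
      ENNReal.ofReal_pow (abs_nonneg _), ← Real.enorm_eq_ofReal_abs, enorm_eq_nnnorm]
  have hint : IntegrableOn (fun η => (Lit L ℓ x ξ η) ^ 2) (Ioc (0:ℝ) 1) := by
    refine ⟨(hfm.pow_const 2).aestronglyMeasurable, ?_⟩
    rw [hasFiniteIntegral_iff_ofReal (ae_of_all _ fun η => sq_nonneg _)]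
    calc (∫⁻ η in Ioc (0:ℝ) 1, ENNReal.ofReal ((Lit L ℓ x ξ η) ^ 2))
        = ∫⁻ η in Ioc (0:ℝ) 1, (‖Lit L ℓ x ξ η‖₊ : ℝ≥0∞) ^ 2 := lintegral_congr hnn
      _ ≤ ENNReal.ofReal (R ^ 2) := hkey
      _ < ∞ := ENNReal.ofReal_lt_top
  have hle : (∫ η in Ioc (0:ℝ) 1, (Lit L ℓ x ξ η) ^ 2) ≤ R ^ 2 := by
    rw [← ENNReal.ofReal_le_ofReal_iff (sq_nonneg R),
      ofReal_integral_eq_lintegral_ofReal hint (ae_of_all _ fun η => sq_nonneg _)]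
    exact le_trans (le_of_eq (lintegral_congr hnn)) hkey
  rw [intervalIntegral.integral_of_le (zero_le_one (α := ℝ))]
  calc Real.sqrt (∫ η in Ioc (0:ℝ) 1, (Lit L ℓ x ξ η) ^ 2)
      ≤ Real.sqrt (R ^ 2) := Real.sqrt_le_sqrt hle
    _ = R := by rw [Real.sqrt_sq hR0]
end

section
/- Let 𝒯 = {(x,ξ) ∈ [0,1]² : ξ ≤ x}, and let L : [0,1]⁴ → ℝ be measurable such that for every (x,ξ) ∈ 𝒯 the function L(x,ξ,·,·) lies in L²([0,1]²;ℝ) with ‖L(x,ξ,·,·)‖_{L²([0,1]²)} ≤ M for a fixed constant M ≥ 0. Then for every g ∈ L²([0,1]²;ℝ) there exists a unique v ∈ L²([0,1]²;ℝ) satisfying v(x,η) = g(x,η) + ∫₀ˣ ∫₀¹ L(x,ξ,η,ζ) v(ξ,ζ) dζ dξ for almost every (x,η) ∈ [0,1]². Consequently, the backstepping transformation v ↦ v − ∫₀ˣ∫₀¹ L(x,ξ,·,ζ)v(ξ,ζ)dζdξ is a bijection of L²([0,1]²;ℝ) onto itself. -/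
open MeasureTheory Set Filter
open scoped ENNReal NNReal

noncomputable section StmtEighteenAux

abbrev S : Set (ℝ × ℝ) := (Set.Icc (0:ℝ) 1) ×ˢ (Set.Icc (0:ℝ) 1)
abbrev μ0 : Measure (ℝ × ℝ) := volume.restrict S

def T (L : ℝ → ℝ → ℝ → ℝ → ℝ) (f : ℝ × ℝ → ℝ) (p : ℝ × ℝ) : ℝ :=
  ∫ ξ in (0:ℝ)..p.1, ∫ ζ in (0:ℝ)..1, L p.1 ξ p.2 ζ * f (ξ, ζ)

lemma T_congr (L : ℝ → ℝ → ℝ → ℝ → ℝ) {f f' : ℝ × ℝ → ℝ} (h : f =ᵐ[μ0] f') :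
    ∀ p : ℝ × ℝ, p.1 ∈ Set.Icc (0:ℝ) 1 → T L f p = T L f' p := by
  have hS : MeasurableSet S := (measurableSet_Icc).prod measurableSet_Icc
  have h1 : ∀ᵐ q ∂(volume : Measure (ℝ × ℝ)), q ∈ S → f q = f' q :=
    ae_imp_of_ae_restrict h
  rw [Measure.volume_eq_prod] at h1
  have h2 : ∀ᵐ ξ ∂(volume : Measure ℝ), ∀ᵐ ζ ∂(volume : Measure ℝ),
      ((ξ, ζ) ∈ S → f (ξ, ζ) = f' (ξ, ζ)) := Measure.ae_ae_of_ae_prod h1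
  intro p hp
  have hx0 : (0:ℝ) ≤ p.1 := hp.1
  unfold T
  apply intervalIntegral.integral_congr_ae
  filter_upwards [h2] with ξ hξ
  intro hξmem
  apply intervalIntegral.integral_congr_ae
  have hξmem' : ξ ∈ Set.Ioc (0:ℝ) p.1 := by
    rwa [Set.uIoc_of_le hx0] at hξmem
  filter_upwards [hξ] with ζ hζ
  intro hζmem
  have hζmem' : ζ ∈ Set.Ioc (0:ℝ) 1 := by
    rwa [Set.uIoc_of_le (by norm_num : (0:ℝ) ≤ 1)] at hζmem
  have hmemS : (ξ, ζ) ∈ S := by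
    constructor
    · exact ⟨le_of_lt hξmem'.1, hξmem'.2.trans hp.2⟩
    · exact ⟨le_of_lt hζmem'.1, hζmem'.2⟩
  rw [hζ hmemS]


lemma T_aesm (L : ℝ → ℝ → ℝ → ℝ → ℝ)
    (hmeas : Measurable (fun p : ℝ × ℝ × ℝ × ℝ => L p.1 p.2.1 p.2.2.1 p.2.2.2))
    {f : ℝ × ℝ → ℝ} (hf : StronglyMeasurable f) :
    AEStronglyMeasurable (T L f) μ0 := by
  have hfm : Measurable f := hf.measurable
  have hinner : StronglyMeasurable (fun w : (ℝ × ℝ) × ℝ =>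
      ∫ ζ in Set.Ioc (0:ℝ) 1, L w.1.1 w.2 w.1.2 ζ * f (w.2, ζ)) := by
    have hk : Measurable (fun q : ((ℝ × ℝ) × ℝ) × ℝ =>
        L q.1.1.1 q.1.2 q.1.1.2 q.2 * f (q.1.2, q.2)) := by
      apply Measurable.mul
      · exact hmeas.comp ((measurable_fst.fst.fst).prodMk ((measurable_fst.snd).prodMk
          ((measurable_fst.fst.snd).prodMk measurable_snd)))
      · exact hfm.comp ((measurable_fst.snd).prodMk measurable_snd)
    exact StronglyMeasurable.integral_prod_right'
      (f := fun q : ((ℝ × ℝ) × ℝ) × ℝ => L q.1.1.1 q.1.2 q.1.1.2 q.2 * f (q.1.2, q.2))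
      hk.stronglyMeasurable
  set F : (ℝ × ℝ) × ℝ → ℝ := fun w =>
    if w.2 ∈ Set.Ioc (0:ℝ) w.1.1 then
      ∫ ζ in Set.Ioc (0:ℝ) 1, L w.1.1 w.2 w.1.2 ζ * f (w.2, ζ) else 0 with hF
  have hsetm : MeasurableSet {w : (ℝ × ℝ) × ℝ | w.2 ∈ Set.Ioc (0:ℝ) w.1.1} := by
    apply MeasurableSet.inter
    · exact measurableSet_lt measurable_const measurable_snd
    · exact measurableSet_le measurable_snd (measurable_fst.comp measurable_fst)
  have hFsm : StronglyMeasurable F := by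
    exact StronglyMeasurable.ite hsetm hinner stronglyMeasurable_const
  have hGsm : StronglyMeasurable (fun p : ℝ × ℝ => ∫ ξ, F (p, ξ)) :=
    hFsm.integral_prod_right'
  apply hGsm.aestronglyMeasurable.congr
  filter_upwards [ae_restrict_mem (measurableSet_Icc.prod measurableSet_Icc)] with p hp
  have hx0 : (0:ℝ) ≤ p.1 := hp.1.1
  have : (fun ξ => F (p, ξ)) = Set.indicator (Set.Ioc (0:ℝ) p.1)
      (fun ξ => ∫ ζ in Set.Ioc (0:ℝ) 1, L p.1 ξ p.2 ζ * f (ξ, ζ)) := by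
    funext ξ
    simp only [hF, Set.indicator_apply]
  rw [this, integral_indicator measurableSet_Ioc]
  unfold T
  rw [intervalIntegral.integral_of_le hx0]
  apply setIntegral_congr_fun measurableSet_Ioc
  intro ξ _
  exact (intervalIntegral.integral_of_le (by norm_num : (0:ℝ) ≤ 1)).symm

lemma ennsq (a : ℝ) : (‖a‖₊ : ℝ≥0∞) ^ (2:ℝ) = ENNReal.ofReal (a ^ 2) := by
  rw [← enorm_eq_nnnorm, Real.enorm_eq_ofReal_abs,
    ENNReal.ofReal_rpow_of_nonneg (abs_nonneg a) (by norm_num)]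
  congr 1
  rw [show (2:ℝ) = ((2:ℕ):ℝ) by norm_num, Real.rpow_natCast, sq_abs]

lemma hLsq (L : ℝ → ℝ → ℝ → ℝ → ℝ) (M : ℝ) (x ξ : ℝ)
    (hmem : MeasureTheory.MemLp (fun p : ℝ × ℝ => L x ξ p.1 p.2) 2 μ0)
    (hsqrt : Real.sqrt (∫ η in (0:ℝ)..1, ∫ ζ in (0:ℝ)..1, (L x ξ η ζ) ^ 2) ≤ M) :
    ∫⁻ p in S, (‖L x ξ p.1 p.2‖₊ : ℝ≥0∞) ^ (2:ℝ) ∂(volume : Measure (ℝ × ℝ))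
      ≤ ENNReal.ofReal (M ^ 2) := by
  have hint : Integrable (fun p : ℝ × ℝ => (L x ξ p.1 p.2) ^ 2) μ0 := hmem.integrable_sq
  have h1 : ∫⁻ p in S, (‖L x ξ p.1 p.2‖₊ : ℝ≥0∞) ^ (2:ℝ) ∂(volume : Measure (ℝ × ℝ))
      = ENNReal.ofReal (∫ p, (L x ξ p.1 p.2) ^ 2 ∂μ0) := by
    rw [ofReal_integral_eq_lintegral_ofReal hint
      (Filter.Eventually.of_forall (fun p => sq_nonneg _))]
    exact lintegral_congr fun p => ennsq _
  rw [h1]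
  apply ENNReal.ofReal_le_ofReal
  -- identify the integral with the iterated interval integral
  have h2 : ∫ p, (L x ξ p.1 p.2) ^ 2 ∂μ0
      = ∫ η in (0:ℝ)..1, ∫ ζ in (0:ℝ)..1, (L x ξ η ζ) ^ 2 := by
    have hprod : μ0 = ((volume : Measure ℝ).restrict (Set.Icc 0 1)).prod
        ((volume : Measure ℝ).restrict (Set.Icc 0 1)) := by
      rw [Measure.prod_restrict, ← Measure.volume_eq_prod]
    rw [hprod] at hint ⊢
    rw [MeasureTheory.integral_prod _ hint]
    rw [intervalIntegral.integral_of_le (by norm_num : (0:ℝ) ≤ 1),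
      ← integral_Icc_eq_integral_Ioc]
    apply setIntegral_congr_fun measurableSet_Icc
    intro η _
    show ∫ ζ in Set.Icc (0:ℝ) 1, L x ξ η ζ ^ 2 = ∫ ζ in (0:ℝ)..1, L x ξ η ζ ^ 2
    rw [intervalIntegral.integral_of_le (by norm_num : (0:ℝ) ≤ 1),
      ← integral_Icc_eq_integral_Ioc]
  rw [h2]
  set I := ∫ η in (0:ℝ)..1, ∫ ζ in (0:ℝ)..1, (L x ξ η ζ) ^ 2 with hI
  have hI0 : 0 ≤ I := by
    apply intervalIntegral.integral_nonneg (by norm_num : (0:ℝ) ≤ 1)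
    intro η _
    apply intervalIntegral.integral_nonneg (by norm_num : (0:ℝ) ≤ 1)
    intro ζ _
    exact sq_nonneg _
  calc I = Real.sqrt I ^ 2 := (Real.sq_sqrt hI0).symm
    _ ≤ M ^ 2 := by
        apply pow_le_pow_left₀ (Real.sqrt_nonneg I) hsqrt

def inK (L : ℝ → ℝ → ℝ → ℝ → ℝ) (f : ℝ × ℝ → ℝ) (x ξ η : ℝ) : ℝ≥0∞ :=
  ∫⁻ ζ in Set.Ioc (0:ℝ) 1, (‖L x ξ η ζ‖₊ : ℝ≥0∞) * ‖f (ξ, ζ)‖₊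

def Jlin (L : ℝ → ℝ → ℝ → ℝ → ℝ) (f : ℝ × ℝ → ℝ) (x η : ℝ) : ℝ≥0∞ :=
  ∫⁻ ξ in Set.Ioc (0:ℝ) x, inK L f x ξ η

def Phi (f : ℝ × ℝ → ℝ) (x : ℝ) : ℝ≥0∞ :=
  ∫⁻ η in Set.Ioc (0:ℝ) 1, (‖f (x, η)‖₊ : ℝ≥0∞) ^ (2:ℝ)

variable {L : ℝ → ℝ → ℝ → ℝ → ℝ} {f : ℝ × ℝ → ℝ}

variable {L : ℝ → ℝ → ℝ → ℝ → ℝ} {f : ℝ × ℝ → ℝ}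

lemma hLm (hmeas : Measurable (fun p : ℝ × ℝ × ℝ × ℝ => L p.1 p.2.1 p.2.2.1 p.2.2.2))
    (x : ℝ) : Measurable (fun q : ℝ × (ℝ × ℝ) => (‖L x q.2.1 q.1 q.2.2‖₊ : ℝ≥0∞)) := by
  refine Measurable.enorm (f := fun q : ℝ × (ℝ × ℝ) => L x q.2.1 q.1 q.2.2) ?_
  exact hmeas.comp (measurable_const.prodMk ((measurable_snd.fst).prodMk
    (measurable_fst.prodMk measurable_snd.snd)))

lemma keyJ (M : ℝ)
    (hmeas : Measurable (fun p : ℝ × ℝ × ℝ × ℝ => L p.1 p.2.1 p.2.2.1 p.2.2.2))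
    (hLb : ∀ x ξ : ℝ, ξ ≤ x → x ∈ Set.Icc (0:ℝ) 1 → ξ ∈ Set.Icc (0:ℝ) 1 →
      ∫⁻ p in S, (‖L x ξ p.1 p.2‖₊ : ℝ≥0∞) ^ (2:ℝ) ∂(volume : Measure (ℝ × ℝ))
        ≤ ENNReal.ofReal (M ^ 2))
    (hf : Measurable f) {x : ℝ} (hx : x ∈ Set.Icc (0:ℝ) 1) :
    ∫⁻ η in Set.Ioc (0:ℝ) 1, (Jlin L f x η) ^ (2:ℝ)
      ≤ ENNReal.ofReal (M ^ 2) * ∫⁻ ξ in Set.Ioc (0:ℝ) x, Phi f ξ := by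
  set ρ : Measure (ℝ × ℝ) :=
    ((volume : Measure ℝ).restrict (Set.Ioc 0 x)).prod
      ((volume : Measure ℝ).restrict (Set.Ioc (0:ℝ) 1)) with hρ
  have hfm : Measurable (fun q : ℝ × ℝ => (‖f q‖₊ : ℝ≥0∞)) := hf.enorm
  set A : ℝ → ℝ≥0∞ := fun η => ∫⁻ q, (‖L x q.1 η q.2‖₊ : ℝ≥0∞) ^ (2:ℝ) ∂ρ with hA
  set B : ℝ≥0∞ := ∫⁻ q, (‖f q‖₊ : ℝ≥0∞) ^ (2:ℝ) ∂ρ with hB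
  have hLq : ∀ η : ℝ, Measurable (fun q : ℝ × ℝ => (‖L x q.1 η q.2‖₊ : ℝ≥0∞)) := by
    intro η
    exact (hLm hmeas x).comp (measurable_const.prodMk measurable_id)
  have conj : Real.HolderConjugate 2 2 := by constructor <;> norm_num
  -- Cauchy-Schwarz pointwise in η
  have hCS : ∀ η : ℝ, (Jlin L f x η) ^ (2:ℝ) ≤ A η * B := by
    intro η
    have h1 : Jlin L f x η = ∫⁻ q, (‖L x q.1 η q.2‖₊ : ℝ≥0∞) * ‖f q‖₊ ∂ρ := by
      rw [hρ, lintegral_prod (fun q : ℝ × ℝ => (‖L x q.1 η q.2‖₊ : ℝ≥0∞) * ‖f q‖₊)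
        ((hLq η).mul hfm).aemeasurable]
      rfl
    have h2 := ENNReal.lintegral_mul_le_Lp_mul_Lq ρ conj (hLq η).aemeasurable
      hfm.aemeasurable
    simp only [Pi.mul_apply] at h2
    rw [← h1] at h2
    have h3 := ENNReal.rpow_le_rpow h2 (by norm_num : (0:ℝ) ≤ 2)
    calc (Jlin L f x η) ^ (2:ℝ) ≤ _ := h3
      _ = A η * B := by
          rw [ENNReal.mul_rpow_of_nonneg _ _ (by norm_num : (0:ℝ) ≤ 2),
            ← ENNReal.rpow_mul, ← ENNReal.rpow_mul,
            show (1/2 : ℝ) * 2 = 1 by norm_num, ENNReal.rpow_one, ENNReal.rpow_one]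
  -- measurability of A
  have hAm : Measurable A := by
    apply Measurable.lintegral_prod_right'
      (f := fun q : ℝ × (ℝ × ℝ) => (‖L x q.2.1 q.1 q.2.2‖₊ : ℝ≥0∞) ^ (2:ℝ))
    exact (hLm hmeas x).pow_const _
  calc ∫⁻ η in Set.Ioc (0:ℝ) 1, (Jlin L f x η) ^ (2:ℝ)
      ≤ ∫⁻ η in Set.Ioc (0:ℝ) 1, A η * B := lintegral_mono fun η => hCS η
    _ = (∫⁻ η in Set.Ioc (0:ℝ) 1, A η) * B := by
        rw [lintegral_mul_const _ hAm]
    _ ≤ ENNReal.ofReal (M ^ 2) * ∫⁻ ξ in Set.Ioc (0:ℝ) x, Phi f ξ := by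
        apply mul_le_mul'
        · -- bound on the L part
          have hswap : ∫⁻ η in Set.Ioc (0:ℝ) 1, A η
              = ∫⁻ ξ in Set.Ioc (0:ℝ) x, ∫⁻ η in Set.Ioc (0:ℝ) 1,
                  ∫⁻ ζ in Set.Ioc (0:ℝ) 1, (‖L x ξ η ζ‖₊ : ℝ≥0∞) ^ (2:ℝ) := by
            have h4 : ∀ η : ℝ, A η = ∫⁻ ξ in Set.Ioc (0:ℝ) x,
                ∫⁻ ζ in Set.Ioc (0:ℝ) 1, (‖L x ξ η ζ‖₊ : ℝ≥0∞) ^ (2:ℝ) := by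
              intro η
              show (∫⁻ q, (‖L x q.1 η q.2‖₊ : ℝ≥0∞) ^ (2:ℝ) ∂ρ) = _
              rw [hρ, lintegral_prod _ ((hLq η).pow_const _).aemeasurable]
            calc ∫⁻ η in Set.Ioc (0:ℝ) 1, A η
                = ∫⁻ η in Set.Ioc (0:ℝ) 1, ∫⁻ ξ in Set.Ioc (0:ℝ) x,
                    ∫⁻ ζ in Set.Ioc (0:ℝ) 1, (‖L x ξ η ζ‖₊ : ℝ≥0∞) ^ (2:ℝ) :=
                  lintegral_congr fun η => h4 η
              _ = _ := by
                  apply lintegral_lintegral_swap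
                  have hswapmeas : Measurable (fun q : ℝ × ℝ =>
                      ∫⁻ ζ in Set.Ioc (0:ℝ) 1, (‖L x q.2 q.1 ζ‖₊ : ℝ≥0∞) ^ (2:ℝ)) := by
                    apply Measurable.lintegral_prod_right'
                      (f := fun r : (ℝ × ℝ) × ℝ => (‖L x r.1.2 r.1.1 r.2‖₊ : ℝ≥0∞) ^ (2:ℝ))
                    exact ((hmeas.comp (measurable_const.prodMk
                      ((measurable_fst.snd).prodMk ((measurable_fst.fst).prodMk
                        measurable_snd)))).enorm).pow_const _
                  exact hswapmeas.aemeasurable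
          rw [hswap]
          calc ∫⁻ ξ in Set.Ioc (0:ℝ) x, ∫⁻ η in Set.Ioc (0:ℝ) 1,
                ∫⁻ ζ in Set.Ioc (0:ℝ) 1, (‖L x ξ η ζ‖₊ : ℝ≥0∞) ^ (2:ℝ)
              ≤ ∫⁻ _ in Set.Ioc (0:ℝ) x, ENNReal.ofReal (M ^ 2) := by
                apply setLIntegral_mono measurable_const
                intro ξ hξ
                have hLqm : Measurable (fun p : ℝ × ℝ => (‖L x ξ p.1 p.2‖₊ : ℝ≥0∞) ^ (2:ℝ)) := by
                  exact ((hmeas.comp (measurable_const.prodMk (measurable_const.prodMk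
                    (measurable_fst.prodMk measurable_snd)))).enorm).pow_const _
                have e1 : ∫⁻ η in Set.Ioc (0:ℝ) 1, ∫⁻ ζ in Set.Ioc (0:ℝ) 1,
                    (‖L x ξ η ζ‖₊ : ℝ≥0∞) ^ (2:ℝ)
                    = ∫⁻ p in (Set.Ioc (0:ℝ) 1) ×ˢ (Set.Ioc (0:ℝ) 1),
                        (‖L x ξ p.1 p.2‖₊ : ℝ≥0∞) ^ (2:ℝ) ∂(volume : Measure (ℝ × ℝ)) := by
                  rw [Measure.volume_eq_prod, ← Measure.prod_restrict,
                    lintegral_prod _ hLqm.aemeasurable]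
                rw [e1]
                calc ∫⁻ p in (Set.Ioc (0:ℝ) 1) ×ˢ (Set.Ioc (0:ℝ) 1),
                      (‖L x ξ p.1 p.2‖₊ : ℝ≥0∞) ^ (2:ℝ) ∂(volume : Measure (ℝ × ℝ))
                    ≤ ∫⁻ p in S, (‖L x ξ p.1 p.2‖₊ : ℝ≥0∞) ^ (2:ℝ)
                        ∂(volume : Measure (ℝ × ℝ)) :=
                      lintegral_mono_set (Set.prod_mono Set.Ioc_subset_Icc_self
                        Set.Ioc_subset_Icc_self)
                  _ ≤ ENNReal.ofReal (M ^ 2) :=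
                      hLb x ξ (le_of_lt hξ.1 |>.trans hξ.2 |> fun _ => hξ.2)
                        hx ⟨le_of_lt hξ.1, hξ.2.trans hx.2⟩
            _ ≤ ENNReal.ofReal (M ^ 2) := by
                rw [setLIntegral_const, Real.volume_Ioc]
                calc ENNReal.ofReal (M ^ 2) * ENNReal.ofReal (x - 0)
                    ≤ ENNReal.ofReal (M ^ 2) * 1 := by
                      apply mul_le_mul_right
                      apply ENNReal.ofReal_le_one.mpr
                      linarith [hx.2]
                  _ = ENNReal.ofReal (M ^ 2) := mul_one _
        · -- B = ∫ Phi
          rw [hB, hρ, lintegral_prod _ (hfm.pow_const _).aemeasurable]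
          exact le_rfl

lemma Tnorm_le (L : ℝ → ℝ → ℝ → ℝ → ℝ) (f : ℝ × ℝ → ℝ) (x η : ℝ) (hx : 0 ≤ x) :
    (‖T L f (x, η)‖₊ : ℝ≥0∞) ≤ Jlin L f x η := by
  have h0 : T L f (x, η) = ∫ ξ in Set.Ioc (0:ℝ) x,
      ∫ ζ in (0:ℝ)..1, L x ξ η ζ * f (ξ, ζ) := intervalIntegral.integral_of_le hx
  rw [h0]
  refine le_trans (enorm_integral_le_lintegral_enorm _) (lintegral_mono fun ξ => ?_)
  have h1 : (∫ ζ in (0:ℝ)..1, L x ξ η ζ * f (ξ, ζ))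
      = ∫ ζ in Set.Ioc (0:ℝ) 1, L x ξ η ζ * f (ξ, ζ) :=
    intervalIntegral.integral_of_le (by norm_num)
  rw [h1]
  refine le_trans (enorm_integral_le_lintegral_enorm _) (lintegral_mono fun ζ => ?_)
  exact (enorm_mul _ _).le

lemma Phi_meas (hf : Measurable f) : Measurable (Phi f) := by
  apply Measurable.lintegral_prod_right'
    (f := fun q : ℝ × ℝ => (‖f q‖₊ : ℝ≥0∞) ^ (2:ℝ))
  exact hf.enorm.pow_const _

lemma intPhi_mono (f : ℝ × ℝ → ℝ) :
    Monotone (fun x => ∫⁻ ξ in Set.Ioc (0:ℝ) x, Phi f ξ) :=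
  fun a b hab => lintegral_mono_set (Set.Ioc_subset_Ioc_right hab)

lemma intPhi_meas (f : ℝ × ℝ → ℝ) :
    Measurable (fun x => ∫⁻ ξ in Set.Ioc (0:ℝ) x, Phi f ξ) :=
  (intPhi_mono f).measurable

lemma keyPhi (M : ℝ)
    (hmeas : Measurable (fun p : ℝ × ℝ × ℝ × ℝ => L p.1 p.2.1 p.2.2.1 p.2.2.2))
    (hLb : ∀ x ξ : ℝ, ξ ≤ x → x ∈ Set.Icc (0:ℝ) 1 → ξ ∈ Set.Icc (0:ℝ) 1 →
      ∫⁻ p in S, (‖L x ξ p.1 p.2‖₊ : ℝ≥0∞) ^ (2:ℝ) ∂(volume : Measure (ℝ × ℝ))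
        ≤ ENNReal.ofReal (M ^ 2))
    (hf : Measurable f)
    (keyJ : ∀ {x : ℝ}, x ∈ Set.Icc (0:ℝ) 1 →
      ∫⁻ η in Set.Ioc (0:ℝ) 1, (Jlin L f x η) ^ (2:ℝ)
        ≤ ENNReal.ofReal (M ^ 2) * ∫⁻ ξ in Set.Ioc (0:ℝ) x, Phi f ξ)
    {x : ℝ} (hx : x ∈ Set.Icc (0:ℝ) 1) :
    Phi (T L f) x ≤ ENNReal.ofReal (M ^ 2) * ∫⁻ ξ in Set.Ioc (0:ℝ) x, Phi f ξ := by
  calc Phi (T L f) x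
      ≤ ∫⁻ η in Set.Ioc (0:ℝ) 1, (Jlin L f x η) ^ (2:ℝ) :=
        lintegral_mono fun η => ENNReal.rpow_le_rpow (Tnorm_le L f x η hx.1)
          (by norm_num)
    _ ≤ _ := keyJ hx

lemma expInt {c : ℝ} (hc : 0 < c) (ξ : ℝ) :
    ∫⁻ x in Set.Ici ξ, ENNReal.ofReal (Real.exp (-c * x))
      = ENNReal.ofReal (Real.exp (-c * ξ) / c) := by
  rw [← Measure.restrict_congr_set (Ioi_ae_eq_Ici (a := ξ))]
  have hInt : IntegrableOn (fun x : ℝ => Real.exp (-c * x)) (Set.Ioi ξ) :=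
    exp_neg_integrableOn_Ioi ξ hc
  rw [← ofReal_integral_eq_lintegral_ofReal hInt
    (ae_of_all _ fun x => (Real.exp_pos _).le)]
  congr 1
  calc ∫ x in Set.Ioi ξ, Real.exp (-c * x)
      = ∫ x in Set.Ioi ξ, Real.exp (-(c * x)) := by simp [neg_mul]
    _ = c⁻¹ • ∫ y in Set.Ioi (c * ξ), Real.exp (-y) :=
        integral_comp_mul_left_Ioi (fun y => Real.exp (-y)) ξ hc
    _ = c⁻¹ * Real.exp (-(c * ξ)) := by rw [integral_exp_neg_Ioi, smul_eq_mul]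
    _ = Real.exp (-c * ξ) / c := by rw [neg_mul]; ring

def Nw (c : ℝ) (f : ℝ × ℝ → ℝ) : ℝ≥0∞ :=
  ∫⁻ x in Set.Ioc (0:ℝ) 1, ENNReal.ofReal (Real.exp (-c * x)) * Phi f x

lemma swapBound {c : ℝ} (hc : 0 < c) (hf : Measurable f) :
    ∫⁻ x in Set.Ioc (0:ℝ) 1,
        ENNReal.ofReal (Real.exp (-c * x)) * ∫⁻ ξ in Set.Ioc (0:ℝ) x, Phi f ξ
      ≤ ENNReal.ofReal c⁻¹ * Nw c f := by
  have hPm : Measurable (Phi f) := Phi_meas hf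
  -- rewrite inner integral with indicator over the fixed set Ioc 0 1
  have h1 : ∀ x ∈ Set.Ioc (0:ℝ) 1, (∫⁻ ξ in Set.Ioc (0:ℝ) x, Phi f ξ)
      = ∫⁻ ξ in Set.Ioc (0:ℝ) 1, (Set.Iic x).indicator (Phi f) ξ := by
    intro x hx
    have hseteq : Set.Iic x ∩ Set.Ioc (0:ℝ) 1 = Set.Ioc 0 x := by
      ext ξ
      constructor
      · rintro ⟨h2, h3⟩; exact ⟨h3.1, h2⟩
      · rintro ⟨h2, h3⟩; exact ⟨h3, h2, h3.trans hx.2⟩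
    rw [lintegral_indicator measurableSet_Iic,
      Measure.restrict_restrict measurableSet_Iic, hseteq]
  have hexpm : Measurable fun x : ℝ => ENNReal.ofReal (Real.exp (-c * x)) := by fun_prop
  set F : ℝ → ℝ → ℝ≥0∞ := fun x ξ =>
    ENNReal.ofReal (Real.exp (-c * x)) * (Set.Iic x).indicator (Phi f) ξ with hF
  have hFm : Measurable (Function.uncurry F) := by
    have : Function.uncurry F = fun q : ℝ × ℝ =>
        ENNReal.ofReal (Real.exp (-c * q.1)) *
          (if q.2 ≤ q.1 then Phi f q.2 else 0) := by
      funext q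
      simp only [Function.uncurry, hF, Set.indicator_apply, Set.mem_Iic]
    rw [this]
    apply Measurable.mul
    · exact hexpm.comp measurable_fst
    · exact Measurable.ite (measurableSet_le measurable_snd measurable_fst)
        (hPm.comp measurable_snd) measurable_const
  calc ∫⁻ x in Set.Ioc (0:ℝ) 1,
        ENNReal.ofReal (Real.exp (-c * x)) * ∫⁻ ξ in Set.Ioc (0:ℝ) x, Phi f ξ
      = ∫⁻ x in Set.Ioc (0:ℝ) 1, ∫⁻ ξ in Set.Ioc (0:ℝ) 1, F x ξ := by
        apply setLIntegral_congr_fun measurableSet_Ioc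
        intro x hx
        beta_reduce
        rw [h1 x hx, hF]
        rw [← lintegral_const_mul _ (hPm.indicator measurableSet_Iic)]
    _ = ∫⁻ ξ in Set.Ioc (0:ℝ) 1, ∫⁻ x in Set.Ioc (0:ℝ) 1, F x ξ :=
        lintegral_lintegral_swap hFm.aemeasurable
    _ ≤ ∫⁻ ξ in Set.Ioc (0:ℝ) 1,
          ENNReal.ofReal c⁻¹ * (ENNReal.ofReal (Real.exp (-c * ξ)) * Phi f ξ) := by
        apply lintegral_mono_ae
        apply ae_of_all
        intro ξ
        have h2 : ∀ x : ℝ, F x ξ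
            = (Set.Ici ξ).indicator (fun x => ENNReal.ofReal (Real.exp (-c * x))) x
                * Phi f ξ := by
          intro x
          simp only [hF, Set.indicator_apply, Set.mem_Iic, Set.mem_Ici]
          by_cases h : ξ ≤ x <;> simp [h]
        calc ∫⁻ x in Set.Ioc (0:ℝ) 1, F x ξ
            = ∫⁻ x in Set.Ioc (0:ℝ) 1,
                (Set.Ici ξ).indicator (fun x => ENNReal.ofReal (Real.exp (-c * x))) x
                  * Phi f ξ := lintegral_congr fun x => h2 x
          _ = (∫⁻ x in Set.Ioc (0:ℝ) 1,
                (Set.Ici ξ).indicator (fun x => ENNReal.ofReal (Real.exp (-c * x))) x)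
                  * Phi f ξ := by
              rw [lintegral_mul_const _ (hexpm.indicator measurableSet_Ici)]
          _ ≤ (∫⁻ x in Set.Ici ξ, ENNReal.ofReal (Real.exp (-c * x))) * Phi f ξ := by
              apply mul_le_mul_left
              rw [lintegral_indicator measurableSet_Ici,
                Measure.restrict_restrict measurableSet_Ici]
              exact lintegral_mono_set Set.inter_subset_left
          _ = ENNReal.ofReal c⁻¹ * (ENNReal.ofReal (Real.exp (-c * ξ)) * Phi f ξ) := by
              rw [expInt hc ξ, div_eq_inv_mul,
                ENNReal.ofReal_mul (inv_nonneg.mpr hc.le), mul_assoc]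
    _ = ENNReal.ofReal c⁻¹ * Nw c f := by
        rw [Nw, ← lintegral_const_mul (f := fun x => ENNReal.ofReal (Real.exp (-c * x)) * Phi f x) _
          (hexpm.mul hPm)]

lemma Nw_contract (M : ℝ)
    (hmeas : Measurable (fun p : ℝ × ℝ × ℝ × ℝ => L p.1 p.2.1 p.2.2.1 p.2.2.2))
    (hLb : ∀ x ξ : ℝ, ξ ≤ x → x ∈ Set.Icc (0:ℝ) 1 → ξ ∈ Set.Icc (0:ℝ) 1 →
      ∫⁻ p in S, (‖L x ξ p.1 p.2‖₊ : ℝ≥0∞) ^ (2:ℝ) ∂(volume : Measure (ℝ × ℝ))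
        ≤ ENNReal.ofReal (M ^ 2))
    (hf : Measurable f)
    (keyJ : ∀ {x : ℝ}, x ∈ Set.Icc (0:ℝ) 1 →
      ∫⁻ η in Set.Ioc (0:ℝ) 1, (Jlin L f x η) ^ (2:ℝ)
        ≤ ENNReal.ofReal (M ^ 2) * ∫⁻ ξ in Set.Ioc (0:ℝ) x, Phi f ξ) :
    Nw (4 * M ^ 2 + 4) (T L f) ≤ 4⁻¹ * Nw (4 * M ^ 2 + 4) f := by
  set c : ℝ := 4 * M ^ 2 + 4 with hcdef
  have hc : 0 < c := by positivity
  have hexpm : Measurable fun x : ℝ => ENNReal.ofReal (Real.exp (-c * x)) := by fun_prop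
  calc Nw c (T L f)
      ≤ ∫⁻ x in Set.Ioc (0:ℝ) 1, ENNReal.ofReal (Real.exp (-c * x)) *
          (ENNReal.ofReal (M ^ 2) * ∫⁻ ξ in Set.Ioc (0:ℝ) x, Phi f ξ) := by
        apply setLIntegral_mono (hexpm.mul (measurable_const.mul (intPhi_meas f)))
        intro x hx
        exact mul_le_mul_right (keyPhi M hmeas hLb hf keyJ ⟨hx.1.le, hx.2⟩) _
    _ = ENNReal.ofReal (M ^ 2) * ∫⁻ x in Set.Ioc (0:ℝ) 1,
          ENNReal.ofReal (Real.exp (-c * x)) * ∫⁻ ξ in Set.Ioc (0:ℝ) x, Phi f ξ := by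
        rw [← lintegral_const_mul (f := fun x =>
          ENNReal.ofReal (Real.exp (-c * x)) * ∫⁻ ξ in Set.Ioc (0:ℝ) x, Phi f ξ) _
          (hexpm.mul (intPhi_meas f))]
        exact lintegral_congr fun x => mul_left_comm _ _ _
    _ ≤ ENNReal.ofReal (M ^ 2) * (ENNReal.ofReal c⁻¹ * Nw c f) :=
        mul_le_mul_right (swapBound hc hf) _
    _ ≤ 4⁻¹ * Nw c f := by
        rw [← mul_assoc, ← ENNReal.ofReal_mul (sq_nonneg M)]
        apply mul_le_mul_left
        calc ENNReal.ofReal (M ^ 2 * c⁻¹) ≤ ENNReal.ofReal (4⁻¹ : ℝ) := by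
              apply ENNReal.ofReal_le_ofReal
              rw [hcdef, mul_inv_le_iff₀ (by positivity)]
              nlinarith [sq_nonneg M]
          _ = 4⁻¹ := by
              rw [ENNReal.ofReal_inv_of_pos (by norm_num : (0:ℝ) < 4)]
              norm_num

def wdens (c : ℝ) : ℝ × ℝ → ℝ≥0∞ := fun p => ENNReal.ofReal (Real.exp (-c * p.1))

def μw (c : ℝ) : Measure (ℝ × ℝ) := μ0.withDensity (wdens c)

lemma wdens_meas (c : ℝ) : Measurable (wdens c) := by unfold wdens; fun_prop

lemma hS_meas : MeasurableSet S := measurableSet_Icc.prod measurableSet_Icc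

def N0 (f : ℝ × ℝ → ℝ) : ℝ≥0∞ := ∫⁻ p, (‖f p‖₊ : ℝ≥0∞) ^ (2:ℝ) ∂μ0

lemma prod_rep : μ0 = ((volume : Measure ℝ).restrict (Set.Icc 0 1)).prod
    ((volume : Measure ℝ).restrict (Set.Icc 0 1)) := by
  rw [Measure.prod_restrict, ← Measure.volume_eq_prod]

lemma iterated_rep {g : ℝ × ℝ → ℝ≥0∞} (hg : AEMeasurable g μ0) :
    ∫⁻ p, g p ∂μ0 = ∫⁻ x in Set.Ioc (0:ℝ) 1, ∫⁻ η in Set.Ioc (0:ℝ) 1, g (x, η) := by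
  have hg' := hg
  rw [prod_rep] at hg'
  rw [prod_rep, lintegral_prod _ hg',
    ← Measure.restrict_congr_set Ioc_ae_eq_Icc]

lemma Nw_eq {c : ℝ} {f : ℝ × ℝ → ℝ} (hf : AEStronglyMeasurable f μ0) :
    ∫⁻ p, (‖f p‖₊ : ℝ≥0∞) ^ (2:ℝ) ∂(μw c) = Nw c f := by
  have ha : AEMeasurable (fun p : ℝ × ℝ => (‖f p‖₊ : ℝ≥0∞) ^ (2:ℝ)) μ0 :=
    hf.aemeasurable.enorm.pow_const _
  rw [μw, lintegral_withDensity_eq_lintegral_mul₀ (wdens_meas c).aemeasurable ha]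
  simp only [Pi.mul_apply]
  rw [iterated_rep (g := fun p => wdens c p * (‖f p‖₊ : ℝ≥0∞) ^ (2:ℝ))
    (((wdens_meas c).aemeasurable).mul ha)]
  apply lintegral_congr fun x => ?_
  show ∫⁻ η in Set.Ioc (0:ℝ) 1,
      ENNReal.ofReal (Real.exp (-c * x)) * (‖f (x, η)‖₊ : ℝ≥0∞) ^ (2:ℝ) = _
  rw [lintegral_const_mul' _ _ ENNReal.ofReal_ne_top]
  rfl

lemma N0_rep {f : ℝ × ℝ → ℝ} (hf : Measurable f) :
    N0 f = ∫⁻ x in Set.Ioc (0:ℝ) 1, Phi f x :=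
  iterated_rep (hf.enorm.pow_const _).aemeasurable

lemma ae_S : ∀ᵐ p ∂μ0, p ∈ S := ae_restrict_mem hS_meas

lemma one_le_scaled {c : ℝ} (hc : 0 ≤ c) {p : ℝ × ℝ} (hp : p ∈ S) :
    (1:ℝ≥0∞) ≤ ENNReal.ofReal (Real.exp c) * wdens c p := by
  rw [wdens, ← ENNReal.ofReal_mul (Real.exp_nonneg _), ← Real.exp_add]
  rw [show (1:ℝ≥0∞) = ENNReal.ofReal 1 by simp]
  apply ENNReal.ofReal_le_ofReal
  apply Real.one_le_exp
  nlinarith [hp.1.2, hp.1.1]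

lemma wdens_le_one {c : ℝ} (hc : 0 ≤ c) {p : ℝ × ℝ} (hp : p ∈ S) :
    wdens c p ≤ 1 := by
  rw [wdens, show (1:ℝ≥0∞) = ENNReal.ofReal 1 by simp]
  apply ENNReal.ofReal_le_ofReal
  rw [Real.exp_le_one_iff]
  nlinarith [hp.1.1]

lemma Nwfull_le_N0 {c : ℝ} (hc : 0 ≤ c) {f : ℝ × ℝ → ℝ} (hf : AEStronglyMeasurable f μ0) :
    ∫⁻ p, (‖f p‖₊ : ℝ≥0∞) ^ (2:ℝ) ∂(μw c) ≤ N0 f := by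
  have ha : AEMeasurable (fun p : ℝ × ℝ => (‖f p‖₊ : ℝ≥0∞) ^ (2:ℝ)) μ0 :=
    hf.aemeasurable.enorm.pow_const _
  rw [μw, lintegral_withDensity_eq_lintegral_mul₀ (wdens_meas c).aemeasurable ha]
  simp only [Pi.mul_apply]
  apply lintegral_mono_ae
  filter_upwards [ae_S] with p hp
  calc wdens c p * (‖f p‖₊ : ℝ≥0∞) ^ (2:ℝ)
      ≤ 1 * (‖f p‖₊ : ℝ≥0∞) ^ (2:ℝ) := mul_le_mul_left (wdens_le_one hc hp) _
    _ = (‖f p‖₊ : ℝ≥0∞) ^ (2:ℝ) := one_mul _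

lemma N0_le_Nwfull {c : ℝ} (hc : 0 ≤ c) {f : ℝ × ℝ → ℝ} (hf : AEStronglyMeasurable f μ0) :
    N0 f ≤ ENNReal.ofReal (Real.exp c) * ∫⁻ p, (‖f p‖₊ : ℝ≥0∞) ^ (2:ℝ) ∂(μw c) := by
  have ha : AEMeasurable (fun p : ℝ × ℝ => (‖f p‖₊ : ℝ≥0∞) ^ (2:ℝ)) μ0 :=
    hf.aemeasurable.enorm.pow_const _
  rw [μw, lintegral_withDensity_eq_lintegral_mul₀ (wdens_meas c).aemeasurable ha]
  simp only [Pi.mul_apply]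
  rw [← lintegral_const_mul' _ _ ENNReal.ofReal_ne_top]
  apply lintegral_mono_ae
  filter_upwards [ae_S] with p hp
  calc (‖f p‖₊ : ℝ≥0∞) ^ (2:ℝ) = 1 * (‖f p‖₊ : ℝ≥0∞) ^ (2:ℝ) := (one_mul _).symm
    _ ≤ (ENNReal.ofReal (Real.exp c) * wdens c p) * (‖f p‖₊ : ℝ≥0∞) ^ (2:ℝ) :=
        mul_le_mul_left (one_le_scaled hc hp) _
    _ = ENNReal.ofReal (Real.exp c) * (wdens c p * (‖f p‖₊ : ℝ≥0∞) ^ (2:ℝ)) := by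
        rw [mul_assoc]

lemma muw_ac (c : ℝ) : μw c ≪ μ0 := withDensity_absolutelyContinuous _ _

lemma mu0_ac {c : ℝ} (hc : 0 ≤ c) : μ0 ≪ μw c := by
  apply Measure.AbsolutelyContinuous.mk
  intro s hs h0
  have h1 : μ0 s = ∫⁻ _ in s, 1 ∂μ0 := by rw [setLIntegral_one]
  have h2 : μw c s = ∫⁻ p in s, wdens c p ∂μ0 := withDensity_apply _ hs
  have h3 : μ0 s ≤ ENNReal.ofReal (Real.exp c) * μw c s := by
    rw [h1, h2, ← lintegral_const_mul _ (wdens_meas c)]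
    apply lintegral_mono_ae
    filter_upwards [ae_restrict_of_ae ae_S] with p hp
    exact one_le_scaled hc hp
  rw [h0, mul_zero] at h3
  exact le_antisymm h3 (zero_le)

lemma inK_meas_eta (hmeas : Measurable (fun p : ℝ × ℝ × ℝ × ℝ => L p.1 p.2.1 p.2.2.1 p.2.2.2))
    (hf : Measurable f) (x : ℝ) :
    Measurable (fun q : ℝ × ℝ => inK L f x q.2 q.1) := by
  apply Measurable.lintegral_prod_right'
    (f := fun r : (ℝ × ℝ) × ℝ =>
      (‖L x r.1.2 r.1.1 r.2‖₊ : ℝ≥0∞) * ‖f (r.1.2, r.2)‖₊)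
  apply Measurable.mul (f := fun r : (ℝ × ℝ) × ℝ => (‖L x r.1.2 r.1.1 r.2‖₊ : ℝ≥0∞))
    (g := fun r : (ℝ × ℝ) × ℝ => (‖f (r.1.2, r.2)‖₊ : ℝ≥0∞))
  · exact (hmeas.comp (measurable_const.prodMk ((measurable_fst.snd).prodMk
      ((measurable_fst.fst).prodMk measurable_snd)))).enorm
  · exact (hf.comp ((measurable_fst.snd).prodMk measurable_snd)).enorm

lemma Jlin_meas_eta (hmeas : Measurable (fun p : ℝ × ℝ × ℝ × ℝ => L p.1 p.2.1 p.2.2.1 p.2.2.2))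
    (hf : Measurable f) (x : ℝ) :
    Measurable (fun η : ℝ => Jlin L f x η) :=
  Measurable.lintegral_prod_right' (f := fun q : ℝ × ℝ => inK L f x q.2 q.1)
    (inK_meas_eta hmeas hf x)

lemma Jlin_meas (hmeas : Measurable (fun p : ℝ × ℝ × ℝ × ℝ => L p.1 p.2.1 p.2.2.1 p.2.2.2))
    (hf : Measurable f) :
    Measurable (fun p : ℝ × ℝ => Jlin L f p.1 p.2) := by
  have hinK : Measurable (fun r : (ℝ × ℝ) × ℝ => inK L f r.1.1 r.2 r.1.2) := by
    apply Measurable.lintegral_prod_right'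
      (f := fun u : ((ℝ × ℝ) × ℝ) × ℝ =>
        (‖L u.1.1.1 u.1.2 u.1.1.2 u.2‖₊ : ℝ≥0∞) * ‖f (u.1.2, u.2)‖₊)
    apply Measurable.mul (f := fun u : ((ℝ × ℝ) × ℝ) × ℝ => (‖L u.1.1.1 u.1.2 u.1.1.2 u.2‖₊ : ℝ≥0∞))
      (g := fun u : ((ℝ × ℝ) × ℝ) × ℝ => (‖f (u.1.2, u.2)‖₊ : ℝ≥0∞))
    · exact (hmeas.comp ((measurable_fst.fst.fst).prodMk ((measurable_fst.snd).prodMk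
        ((measurable_fst.fst.snd).prodMk measurable_snd)))).enorm
    · exact (hf.comp ((measurable_fst.snd).prodMk measurable_snd)).enorm
  have heq : (fun p : ℝ × ℝ => Jlin L f p.1 p.2)
      = fun p : ℝ × ℝ => ∫⁻ ξ, (Set.Ioc (0:ℝ) p.1).indicator
          (fun ξ => inK L f p.1 ξ p.2) ξ := by
    funext p
    rw [lintegral_indicator measurableSet_Ioc]
    rfl
  rw [heq]
  apply Measurable.lintegral_prod_right'
    (f := fun r : (ℝ × ℝ) × ℝ => (Set.Ioc (0:ℝ) r.1.1).indicator
      (fun ξ => inK L f r.1.1 ξ r.1.2) r.2)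
  have : (fun r : (ℝ × ℝ) × ℝ => (Set.Ioc (0:ℝ) r.1.1).indicator
      (fun ξ => inK L f r.1.1 ξ r.1.2) r.2)
      = fun r : (ℝ × ℝ) × ℝ => if r.2 ∈ Set.Ioc (0:ℝ) r.1.1
          then inK L f r.1.1 r.2 r.1.2 else 0 := by
    funext r
    rw [Set.indicator_apply]
  rw [this]
  apply Measurable.ite _ hinK measurable_const
  apply MeasurableSet.inter
  · exact measurableSet_lt measurable_const measurable_snd
  · exact measurableSet_le measurable_snd (measurable_fst.comp measurable_fst)

lemma Jlin_lt_top_ae (M : ℝ)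
    (hmeas : Measurable (fun p : ℝ × ℝ × ℝ × ℝ => L p.1 p.2.1 p.2.2.1 p.2.2.2))
    (hf : Measurable f) (hN0 : N0 f ≠ ⊤)
    (keyJ : ∀ {x : ℝ}, x ∈ Set.Icc (0:ℝ) 1 →
      ∫⁻ η in Set.Ioc (0:ℝ) 1, (Jlin L f x η) ^ (2:ℝ)
        ≤ ENNReal.ofReal (M ^ 2) * ∫⁻ ξ in Set.Ioc (0:ℝ) x, Phi f ξ) :
    ∀ᵐ p ∂μ0, Jlin L f p.1 p.2 < ⊤ := by
  -- for each x in Icc, a.e. η in Ioc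
  have hslice : ∀ x ∈ Set.Icc (0:ℝ) 1,
      ∀ᵐ η ∂(volume : Measure ℝ).restrict (Set.Ioc 0 1), Jlin L f x η < ⊤ := by
    intro x hx
    have hb : ∫⁻ η in Set.Ioc (0:ℝ) 1, (Jlin L f x η) ^ (2:ℝ) ≠ ⊤ := by
      apply ne_of_lt
      calc ∫⁻ η in Set.Ioc (0:ℝ) 1, (Jlin L f x η) ^ (2:ℝ)
          ≤ ENNReal.ofReal (M ^ 2) * ∫⁻ ξ in Set.Ioc (0:ℝ) x, Phi f ξ := keyJ hx
        _ ≤ ENNReal.ofReal (M ^ 2) * ∫⁻ ξ in Set.Ioc (0:ℝ) 1, Phi f ξ :=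
            mul_le_mul_right (lintegral_mono_set (Set.Ioc_subset_Ioc_right hx.2)) _
        _ = ENNReal.ofReal (M ^ 2) * N0 f := by rw [N0_rep hf]
        _ < ⊤ := ENNReal.mul_lt_top ENNReal.ofReal_lt_top (lt_top_iff_ne_top.mpr hN0)
    have h2 := ae_lt_top ((Jlin_meas_eta hmeas hf x).pow_const (2:ℝ)) hb
    filter_upwards [h2] with η hη
    by_contra h3
    rw [not_lt, top_le_iff] at h3
    rw [h3, ENNReal.top_rpow_of_pos (by norm_num)] at hη
    exact (lt_irrefl _ hη).elim
  -- upgrade to a.e. on the square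
  have hprod : μ0 = ((volume : Measure ℝ).restrict (Set.Icc 0 1)).prod
      ((volume : Measure ℝ).restrict (Set.Icc 0 1)) := by
    rw [Measure.prod_restrict, ← Measure.volume_eq_prod]
  have hEm : MeasurableSet {p : ℝ × ℝ | ¬ Jlin L f p.1 p.2 < ⊤} :=
    (measurableSet_lt (Jlin_meas hmeas hf) measurable_const).compl
  rw [ae_iff, hprod]
  rw [Measure.measure_prod_null hEm]
  filter_upwards [ae_restrict_mem measurableSet_Icc] with x hx
  have h4 := hslice x hx
  rw [ae_iff] at h4
  show (volume.restrict (Set.Icc 0 1)) (Prod.mk x ⁻¹' {p : ℝ × ℝ | ¬ Jlin L f p.1 p.2 < ⊤}) = 0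
  rw [Measure.restrict_congr_set Ioc_ae_eq_Icc.symm]
  exact h4

lemma T_sub (hmeas : Measurable (fun p : ℝ × ℝ × ℝ × ℝ => L p.1 p.2.1 p.2.2.1 p.2.2.2))
    {f1 f2 : ℝ × ℝ → ℝ} (h1m : Measurable f1) (h2m : Measurable f2)
    (hJ1 : ∀ᵐ p ∂μ0, Jlin L f1 p.1 p.2 < ⊤)
    (hJ2 : ∀ᵐ p ∂μ0, Jlin L f2 p.1 p.2 < ⊤) :
    ∀ᵐ p ∂μ0, T L (f1 - f2) p = T L f1 p - T L f2 p := by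
  filter_upwards [hJ1, hJ2, ae_S] with p hp1 hp2 hpS
  set x := p.1 with hxdef
  set η := p.2 with hηdef
  have hx : (0:ℝ) ≤ x := hpS.1.1
  -- basic measurability facts
  have hLζ : ∀ ξ : ℝ, Measurable (fun ζ => L x ξ η ζ) := fun ξ =>
    hmeas.comp (measurable_const.prodMk (measurable_const.prodMk
      (measurable_const.prodMk measurable_id)))
  have hinKm : ∀ (g : ℝ × ℝ → ℝ), Measurable g →
      Measurable (fun ξ : ℝ => inK L g x ξ η) := by
    intro g hg
    exact (inK_meas_eta hmeas hg x).comp (measurable_const.prodMk measurable_id)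
  -- integrability of the inner integrand when inK is finite
  have hInner : ∀ (g : ℝ × ℝ → ℝ), Measurable g → ∀ ξ : ℝ, inK L g x ξ η < ⊤ →
      IntegrableOn (fun ζ => L x ξ η ζ * g (ξ, ζ)) (Set.Ioc 0 1) volume := by
    intro g hg ξ hlt
    refine ⟨((hLζ ξ).mul (hg.comp (measurable_const.prodMk
      measurable_id))).aestronglyMeasurable, ?_⟩
    show (∫⁻ ζ in Set.Ioc (0:ℝ) 1, (‖L x ξ η ζ * g (ξ, ζ)‖₊ : ℝ≥0∞)) < ⊤
    have heq : ∫⁻ ζ in Set.Ioc (0:ℝ) 1, (‖L x ξ η ζ * g (ξ, ζ)‖₊ : ℝ≥0∞)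
        = inK L g x ξ η := by
      rw [inK]
      apply lintegral_congr fun ζ => ?_
      rw [nnnorm_mul, ENNReal.coe_mul]
    rw [heq]
    exact hlt
  -- a.e. finiteness of inner kernels on the slice
  have hae1 : ∀ᵐ ξ ∂(volume : Measure ℝ).restrict (Set.Ioc 0 x),
      inK L f1 x ξ η < ⊤ := ae_lt_top (hinKm f1 h1m) hp1.ne
  have hae2 : ∀ᵐ ξ ∂(volume : Measure ℝ).restrict (Set.Ioc 0 x),
      inK L f2 x ξ η < ⊤ := ae_lt_top (hinKm f2 h2m) hp2.ne
  -- integrability of outer integrands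
  have hOuter : ∀ (g : ℝ × ℝ → ℝ), Measurable g → Jlin L g x η < ⊤ →
      IntegrableOn (fun ξ => ∫ ζ in (0:ℝ)..1, L x ξ η ζ * g (ξ, ζ))
        (Set.Ioc 0 x) volume := by
    intro g hg hJ
    have hfun : (fun ξ => ∫ ζ in (0:ℝ)..1, L x ξ η ζ * g (ξ, ζ))
        = fun ξ => ∫ ζ in Set.Ioc (0:ℝ) 1, L x ξ η ζ * g (ξ, ζ) := by
      funext ξ
      exact intervalIntegral.integral_of_le (by norm_num)
    constructor
    · rw [hfun]
      apply StronglyMeasurable.aestronglyMeasurable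
      apply StronglyMeasurable.integral_prod_right'
        (f := fun r : ℝ × ℝ => L x r.1 η r.2 * g (r.1, r.2))
      apply Measurable.stronglyMeasurable
      apply Measurable.mul
      · exact hmeas.comp (measurable_const.prodMk (measurable_fst.prodMk
          (measurable_const.prodMk measurable_snd)))
      · exact hg.comp (measurable_fst.prodMk measurable_snd)
    · rw [HasFiniteIntegral]
      calc ∫⁻ ξ in Set.Ioc (0:ℝ) x, (‖∫ ζ in (0:ℝ)..1, L x ξ η ζ * g (ξ, ζ)‖₊ : ℝ≥0∞)
          ≤ ∫⁻ ξ in Set.Ioc (0:ℝ) x, inK L g x ξ η := by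
            apply lintegral_mono fun ξ => ?_
            have h5 : (∫ ζ in (0:ℝ)..1, L x ξ η ζ * g (ξ, ζ))
                = ∫ ζ in Set.Ioc (0:ℝ) 1, L x ξ η ζ * g (ξ, ζ) :=
              intervalIntegral.integral_of_le (by norm_num)
            rw [h5, inK]
            refine le_trans (enorm_integral_le_lintegral_enorm _)
              (lintegral_mono fun ζ => ?_)
            exact (enorm_mul _ _).le
        _ = Jlin L g x η := rfl
        _ < ⊤ := hJ
  -- now the computation
  have hsub : ∀ᵐ ξ ∂(volume : Measure ℝ), ξ ∈ Set.uIoc (0:ℝ) x →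
      (∫ ζ in (0:ℝ)..1, L x ξ η ζ * (f1 - f2) (ξ, ζ))
        = (∫ ζ in (0:ℝ)..1, L x ξ η ζ * f1 (ξ, ζ))
          - ∫ ζ in (0:ℝ)..1, L x ξ η ζ * f2 (ξ, ζ) := by
    have h6 := (ae_restrict_iff' measurableSet_Ioc).mp hae1
    have h7 := (ae_restrict_iff' measurableSet_Ioc).mp hae2
    filter_upwards [h6, h7] with ξ h8 h9 hmem
    rw [Set.uIoc_of_le hx] at hmem
    have i1 : IntervalIntegrable (fun ζ => L x ξ η ζ * f1 (ξ, ζ)) volume 0 1 :=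
      (intervalIntegrable_iff_integrableOn_Ioc_of_le (by norm_num)).mpr
        (hInner f1 h1m ξ (h8 hmem))
    have i2 : IntervalIntegrable (fun ζ => L x ξ η ζ * f2 (ξ, ζ)) volume 0 1 :=
      (intervalIntegrable_iff_integrableOn_Ioc_of_le (by norm_num)).mpr
        (hInner f2 h2m ξ (h9 hmem))
    rw [← intervalIntegral.integral_sub i1 i2]
    apply intervalIntegral.integral_congr
    intro ζ _
    show L x ξ η ζ * ((f1 - f2) (ξ, ζ)) = _
    rw [Pi.sub_apply]
    ring
  have o1 : IntervalIntegrable (fun ξ => ∫ ζ in (0:ℝ)..1, L x ξ η ζ * f1 (ξ, ζ))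
      volume 0 x :=
    (intervalIntegrable_iff_integrableOn_Ioc_of_le hx).mpr (hOuter f1 h1m hp1)
  have o2 : IntervalIntegrable (fun ξ => ∫ ζ in (0:ℝ)..1, L x ξ η ζ * f2 (ξ, ζ))
      volume 0 x :=
    (intervalIntegrable_iff_integrableOn_Ioc_of_le hx).mpr (hOuter f2 h2m hp2)
  show T L (f1 - f2) p = T L f1 p - T L f2 p
  have hT : T L (f1 - f2) p = ∫ ξ in (0:ℝ)..x,
      ((∫ ζ in (0:ℝ)..1, L x ξ η ζ * f1 (ξ, ζ))
        - ∫ ζ in (0:ℝ)..1, L x ξ η ζ * f2 (ξ, ζ)) :=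
    intervalIntegral.integral_congr_ae hsub
  rw [hT, intervalIntegral.integral_sub o1 o2]
  rfl

lemma eLp_sq {α : Type*} [MeasurableSpace α] (f : α → ℝ) (μ : Measure α) :
    eLpNorm f 2 μ = (∫⁻ p, (‖f p‖₊ : ℝ≥0∞) ^ (2:ℝ) ∂μ) ^ (1/2:ℝ) := by
  rw [eLpNorm_eq_lintegral_rpow_enorm_toReal (by norm_num) (by norm_num)]
  norm_num
  rfl

lemma lint_sq_eq {α : Type*} [MeasurableSpace α] (f : α → ℝ) (μ : Measure α) :
    (∫⁻ p, (‖f p‖₊ : ℝ≥0∞) ^ (2:ℝ) ∂μ) = (eLpNorm f 2 μ) ^ (2:ℝ) := by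
  rw [eLp_sq, ← ENNReal.rpow_mul, show (1/2:ℝ) * 2 = 1 by norm_num, ENNReal.rpow_one]

lemma memLp_muw_iff {c : ℝ} (hc : 0 ≤ c) {f : ℝ × ℝ → ℝ} :
    MemLp f 2 μ0 ↔ MemLp f 2 (μw c) := by
  constructor
  · rintro ⟨hsm, hfin⟩
    refine ⟨hsm.mono_ac (muw_ac c), ?_⟩
    rw [eLp_sq]
    have h1 : (∫⁻ p, (‖f p‖₊ : ℝ≥0∞) ^ (2:ℝ) ∂(μw c)) ≤ N0 f := Nwfull_le_N0 hc hsm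
    have h2 : N0 f < ⊤ := by
      rw [N0, lint_sq_eq]
      exact ENNReal.rpow_lt_top_of_nonneg (by norm_num) hfin.ne
    exact ENNReal.rpow_lt_top_of_nonneg (by norm_num) (h1.trans_lt h2).ne
  · rintro ⟨hsm, hfin⟩
    have hsm0 : AEStronglyMeasurable f μ0 := hsm.mono_ac (mu0_ac hc)
    refine ⟨hsm0, ?_⟩
    rw [eLp_sq]
    have h1 : N0 f ≤ ENNReal.ofReal (Real.exp c)
        * ∫⁻ p, (‖f p‖₊ : ℝ≥0∞) ^ (2:ℝ) ∂(μw c) := N0_le_Nwfull hc hsm0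
    have h2 : (∫⁻ p, (‖f p‖₊ : ℝ≥0∞) ^ (2:ℝ) ∂(μw c)) < ⊤ := by
      rw [lint_sq_eq]
      exact ENNReal.rpow_lt_top_of_nonneg (by norm_num) hfin.ne
    have h3 : N0 f < ⊤ :=
      h1.trans_lt (ENNReal.mul_lt_top ENNReal.ofReal_lt_top h2)
    exact ENNReal.rpow_lt_top_of_nonneg (by norm_num) h3.ne

lemma quarter_rpow_half : (4⁻¹ : ℝ≥0∞) ^ (1/2:ℝ) = ((2⁻¹ : ℝ≥0) : ℝ≥0∞) := by
  have h1 : (4⁻¹ : ℝ≥0∞) = ((2⁻¹ : ℝ≥0∞)) ^ (2:ℝ) := by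
    rw [show (2:ℝ) = ((2:ℕ):ℝ) by norm_num, ENNReal.rpow_natCast]
    rw [show ((2:ℝ≥0∞)⁻¹) ^ (2:ℕ) = ((2:ℝ≥0∞) ^ (2:ℕ))⁻¹ by rw [ENNReal.inv_pow]]
    norm_num
  rw [h1, ← ENNReal.rpow_mul, show (2:ℝ) * (1/2) = 1 by norm_num, ENNReal.rpow_one]
  simp

end StmtEighteenAux

theorem stmt_18 (L : ℝ → ℝ → ℝ → ℝ → ℝ) (M : ℝ) (hM : 0 ≤ M)
    (hmeas : Measurable (fun p : ℝ × ℝ × ℝ × ℝ => L p.1 p.2.1 p.2.2.1 p.2.2.2))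
    (hL2 : ∀ x ξ : ℝ, ξ ≤ x → x ∈ Set.Icc (0:ℝ) 1 → ξ ∈ Set.Icc (0:ℝ) 1 →
      MeasureTheory.MemLp (fun p : ℝ × ℝ => L x ξ p.1 p.2) 2
        (MeasureTheory.volume.restrict ((Set.Icc (0:ℝ) 1) ×ˢ (Set.Icc (0:ℝ) 1))) ∧
      Real.sqrt (∫ η in (0:ℝ)..1, ∫ ζ in (0:ℝ)..1, (L x ξ η ζ) ^ 2) ≤ M) :
    ∀ g : ℝ → ℝ → ℝ,
      MeasureTheory.MemLp (fun p : ℝ × ℝ => g p.1 p.2) 2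
        (MeasureTheory.volume.restrict ((Set.Icc (0:ℝ) 1) ×ˢ (Set.Icc (0:ℝ) 1))) →
      ∃ v : ℝ → ℝ → ℝ,
        MeasureTheory.MemLp (fun p : ℝ × ℝ => v p.1 p.2) 2
          (MeasureTheory.volume.restrict ((Set.Icc (0:ℝ) 1) ×ˢ (Set.Icc (0:ℝ) 1))) ∧
        (∀ᵐ p ∂(MeasureTheory.volume.restrict
            ((Set.Icc (0:ℝ) 1) ×ˢ (Set.Icc (0:ℝ) 1))),
          v p.1 p.2 = g p.1 p.2 +
            ∫ ξ in (0:ℝ)..p.1, ∫ ζ in (0:ℝ)..1, L p.1 ξ p.2 ζ * v ξ ζ) ∧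
        (∀ w : ℝ → ℝ → ℝ,
          MeasureTheory.MemLp (fun p : ℝ × ℝ => w p.1 p.2) 2
            (MeasureTheory.volume.restrict
              ((Set.Icc (0:ℝ) 1) ×ˢ (Set.Icc (0:ℝ) 1))) →
          (∀ᵐ p ∂(MeasureTheory.volume.restrict
              ((Set.Icc (0:ℝ) 1) ×ˢ (Set.Icc (0:ℝ) 1))),
            w p.1 p.2 = g p.1 p.2 +
              ∫ ξ in (0:ℝ)..p.1, ∫ ζ in (0:ℝ)..1, L p.1 ξ p.2 ζ * w ξ ζ) →
          (∀ᵐ p ∂(MeasureTheory.volume.restrict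
              ((Set.Icc (0:ℝ) 1) ×ˢ (Set.Icc (0:ℝ) 1))),
            w p.1 p.2 = v p.1 p.2)) := by
  intro g hg
  classical
  set c : ℝ := 4 * M ^ 2 + 4 with hcdef
  have hc0 : (0:ℝ) ≤ c := by positivity
  have hLb : ∀ x ξ : ℝ, ξ ≤ x → x ∈ Set.Icc (0:ℝ) 1 → ξ ∈ Set.Icc (0:ℝ) 1 →
      ∫⁻ p in S, (‖L x ξ p.1 p.2‖₊ : ℝ≥0∞) ^ (2:ℝ) ∂(volume : Measure (ℝ × ℝ))
        ≤ ENNReal.ofReal (M ^ 2) := fun x ξ h1 h2 h3 =>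
    hLsq L M x ξ (hL2 x ξ h1 h2 h3).1 (hL2 x ξ h1 h2 h3).2
  have hkeyJ : ∀ {f : ℝ × ℝ → ℝ}, Measurable f → ∀ {x : ℝ}, x ∈ Set.Icc (0:ℝ) 1 →
      ∫⁻ η in Set.Ioc (0:ℝ) 1, (Jlin L f x η) ^ (2:ℝ)
        ≤ ENNReal.ofReal (M ^ 2) * ∫⁻ ξ in Set.Ioc (0:ℝ) x, Phi f ξ :=
    fun {f} hf {x} hx => keyJ M hmeas hLb hf hx
  set G : ℝ × ℝ → ℝ := fun p => g p.1 p.2 with hGdef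
  have hG0 : MemLp G 2 μ0 := hg
  have hGw : MemLp G 2 (μw c) := (memLp_muw_iff hc0).mp hG0
  have hN0fin : ∀ {f : ℝ × ℝ → ℝ}, MemLp f 2 μ0 → N0 f ≠ ⊤ := by
    intro f hf
    rw [N0, lint_sq_eq]
    exact (ENNReal.rpow_lt_top_of_nonneg (by norm_num) hf.2.ne).ne
  have hTmem0 : ∀ {f : ℝ × ℝ → ℝ}, StronglyMeasurable f → MemLp f 2 μ0 →
      MemLp (T L f) 2 μ0 ∧ MemLp (T L f) 2 (μw c) := by
    intro f hfm hf
    have haT : AEStronglyMeasurable (T L f) μ0 := T_aesm L hmeas hfm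
    have hNwT : Nw c (T L f) ≤ 4⁻¹ * Nw c f :=
      Nw_contract M hmeas hLb hfm.measurable (fun {x} hx => hkeyJ hfm.measurable hx)
    have hNwf : Nw c f < ⊤ := by
      rw [← Nw_eq hf.1, lint_sq_eq]
      exact ENNReal.rpow_lt_top_of_nonneg (by norm_num)
        ((memLp_muw_iff hc0).mp hf).2.ne
    have hN0T : N0 (T L f) < ⊤ := by
      calc N0 (T L f) ≤ ENNReal.ofReal (Real.exp c)
          * ∫⁻ p, (‖T L f p‖₊ : ℝ≥0∞) ^ (2:ℝ) ∂(μw c) := N0_le_Nwfull hc0 haT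
        _ = ENNReal.ofReal (Real.exp c) * Nw c (T L f) := by rw [Nw_eq haT]
        _ ≤ ENNReal.ofReal (Real.exp c) * (4⁻¹ * Nw c f) := mul_le_mul_right hNwT _
        _ < ⊤ := ENNReal.mul_lt_top ENNReal.ofReal_lt_top
            (ENNReal.mul_lt_top (by norm_num) hNwf)
    have hT0 : MemLp (T L f) 2 μ0 := ⟨haT, by
      rw [eLp_sq]
      exact ENNReal.rpow_lt_top_of_nonneg (by norm_num) hN0T.ne⟩
    exact ⟨hT0, (memLp_muw_iff hc0).mp hT0⟩
  have hΦmem : ∀ F : Lp ℝ 2 (μw c), MemLp (fun p => G p + T L (⇑F) p) 2 (μw c) := by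
    intro F
    have h1 := hTmem0 (Lp.stronglyMeasurable F) ((memLp_muw_iff hc0).mpr (Lp.memLp F))
    exact hGw.add h1.2
  set Φ : Lp ℝ 2 (μw c) → Lp ℝ 2 (μw c) := fun F => MemLp.toLp _ (hΦmem F) with hΦdef
  have hΦcoe : ∀ F, ⇑(Φ F) =ᵐ[μw c] fun p => G p + T L (⇑F) p :=
    fun F => MemLp.coeFn_toLp _
  have haeSw : ∀ᵐ p ∂(μw c), p ∈ S := ae_S.filter_mono (muw_ac c).ae_le
  have hlip : ∀ F1 F2 : Lp ℝ 2 (μw c),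
      edist (Φ F1) (Φ F2) ≤ ((2⁻¹ : ℝ≥0) : ℝ≥0∞) * edist F1 F2 := by
    intro F1 F2
    have hm1 : StronglyMeasurable (⇑F1) := Lp.stronglyMeasurable F1
    have hm2 : StronglyMeasurable (⇑F2) := Lp.stronglyMeasurable F2
    have hl1 : MemLp (⇑F1) 2 μ0 := (memLp_muw_iff hc0).mpr (Lp.memLp F1)
    have hl2 : MemLp (⇑F2) 2 μ0 := (memLp_muw_iff hc0).mpr (Lp.memLp F2)
    set d : ℝ × ℝ → ℝ := ⇑F1 - ⇑F2 with hd
    have hdm : StronglyMeasurable d := hm1.sub hm2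
    have hsub : ∀ᵐ p ∂μ0, T L d p = T L (⇑F1) p - T L (⇑F2) p :=
      T_sub hmeas hm1.measurable hm2.measurable
        (Jlin_lt_top_ae M hmeas hm1.measurable (hN0fin hl1)
          (fun {x} hx => hkeyJ hm1.measurable hx))
        (Jlin_lt_top_ae M hmeas hm2.measurable (hN0fin hl2)
          (fun {x} hx => hkeyJ hm2.measurable hx))
    have e1 : ⇑(Φ F1) - ⇑(Φ F2) =ᵐ[μw c] T L d := by
      have h3 : ∀ᵐ p ∂(μw c), T L d p = T L (⇑F1) p - T L (⇑F2) p :=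
        hsub.filter_mono (muw_ac c).ae_le
      filter_upwards [hΦcoe F1, hΦcoe F2, h3] with p hp1 hp2 hp3
      simp only [Pi.sub_apply, hp1, hp2, hp3]
      ring
    have hed2 : edist F1 F2 = (Nw c d) ^ (1/2:ℝ) := by
      rw [Lp.edist_def, eLp_sq, Nw_eq hdm.aestronglyMeasurable]
    have hTd : AEStronglyMeasurable (T L d) μ0 := T_aesm L hmeas hdm
    calc edist (Φ F1) (Φ F2) = eLpNorm (T L d) 2 (μw c) := by
          rw [Lp.edist_def]
          exact eLpNorm_congr_ae e1
      _ = (Nw c (T L d)) ^ (1/2:ℝ) := by rw [eLp_sq, Nw_eq hTd]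
      _ ≤ (4⁻¹ * Nw c d) ^ (1/2:ℝ) :=
          ENNReal.rpow_le_rpow (Nw_contract M hmeas hLb hdm.measurable
            (fun {x} hx => hkeyJ hdm.measurable hx)) (by norm_num)
      _ = (4⁻¹:ℝ≥0∞) ^ (1/2:ℝ) * (Nw c d) ^ (1/2:ℝ) :=
          ENNReal.mul_rpow_of_nonneg _ _ (by norm_num)
      _ = ((2⁻¹ : ℝ≥0) : ℝ≥0∞) * edist F1 F2 := by
          rw [hed2, quarter_rpow_half]
  have hcontr : ContractingWith (2⁻¹ : ℝ≥0) Φ := ⟨by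
      rw [show (1:ℝ≥0) = 1⁻¹ by norm_num]
      exact inv_strictAnti₀ (by norm_num) (by norm_num), hlip⟩
  haveI : Nonempty (Lp ℝ 2 (μw c)) := ⟨0⟩
  set V : Lp ℝ 2 (μw c) := ContractingWith.fixedPoint Φ hcontr with hVdef
  have hfix : Φ V = V := hcontr.fixedPoint_isFixedPt
  set vf : ℝ × ℝ → ℝ := fun p => G p + T L (⇑V) p with hvf
  have hveqw : ⇑V =ᵐ[μw c] vf := by
    conv_lhs => rw [← hfix]
    exact hΦcoe V
  have hveq0 : ⇑V =ᵐ[μ0] vf := hveqw.filter_mono (mu0_ac hc0).ae_le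
  have hVl0 : MemLp (⇑V) 2 μ0 := (memLp_muw_iff hc0).mpr (Lp.memLp V)
  have hTV : MemLp (T L (⇑V)) 2 μ0 := (hTmem0 (Lp.stronglyMeasurable V) hVl0).1
  have hvmem : MemLp vf 2 μ0 := hG0.add hTV
  refine ⟨fun x η => vf (x, η), hvmem, ?_, ?_⟩
  · filter_upwards [ae_S] with p hp
    have h1 : T L vf p = T L (⇑V) p := T_congr L hveq0.symm p hp.1
    show vf (p.1, p.2) = g p.1 p.2 +
      ∫ ξ in (0:ℝ)..p.1, ∫ ζ in (0:ℝ)..1, L p.1 ξ p.2 ζ * vf (ξ, ζ)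
    calc vf (p.1, p.2) = G p + T L (⇑V) p := rfl
      _ = G p + T L vf p := by rw [h1]
      _ = _ := rfl
  · intro w hw hweq
    set wf : ℝ × ℝ → ℝ := fun p => w p.1 p.2 with hwf
    have hw0 : MemLp wf 2 μ0 := hw
    have hww : MemLp wf 2 (μw c) := (memLp_muw_iff hc0).mp hw0
    set W : Lp ℝ 2 (μw c) := MemLp.toLp _ hww with hWdef
    have hWcoe : ⇑W =ᵐ[μw c] wf := MemLp.coeFn_toLp _
    have hWcoe0 : ⇑W =ᵐ[μ0] wf := hWcoe.filter_mono (mu0_ac hc0).ae_le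
    have hfixW : Φ W = W := by
      apply Lp.ext
      have h2 : ∀ p : ℝ × ℝ, p.1 ∈ Set.Icc (0:ℝ) 1 → T L (⇑W) p = T L wf p :=
        T_congr L hWcoe0
      have h3 : ∀ᵐ p ∂(μw c), wf p = G p + T L wf p :=
        hweq.filter_mono (muw_ac c).ae_le
      filter_upwards [hΦcoe W, h3, haeSw, hWcoe] with p hp1 hp3 hpS hp4
      rw [hp1, h2 p hpS.1, ← hp3, hp4]
    have hWV : W = V := hcontr.fixedPoint_unique hfixW
    have hfinal : wf =ᵐ[μ0] vf := by
      have h5 : ⇑W =ᵐ[μ0] vf := by rw [hWV]; exact hveq0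
      exact hWcoe0.symm.trans h5
    filter_upwards [hfinal] with p hp
    exact hp
end
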